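/- arXiv:1102.0862 — 8 statements merged into one kernel-verified Lean document; each statement's English description precedes it below -/
import Mathlib

section
/- For binary relations θ ⊆ X×Y and η ⊆ Y×Z between finite sets, let Φ₁(θ) be the PBR on (X,Y) whose edges are exactly the pairs (x^(d),y^(c)) with (x,y) ∈ θ. Then Φ₁(η∘θ) = Φ₁(η)∘Φ₁(θ), where η∘θ = {(x,z) : ∃y, (x,y) ∈ θ and (y,z) ∈ η} is the usual composition of binary relations and the composition on the right-hand side is composition of PBRs. In other words, Φ₁ is an inclusion of the category of binary relations into the category of PBRs which respects composition. -/
namespace PBRPaper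

/-- A partitioned binary relation (PBR) on `(X, Y)`: a binary relation on
the disjoint union `X ⊕ Y`. -/
abbrev PBR (X Y : Type) : Type := Set ((X ⊕ Y) × (X ⊕ Y))

variable {X Y Z : Type}

/-- The inclusion of `X ⊕ Y` into `X ⊕ Y ⊕ Z`. -/
def ι₁ : X ⊕ Y → X ⊕ Y ⊕ Z := Sum.elim Sum.inl fun y => Sum.inr (Sum.inl y)

/-- The inclusion of `Y ⊕ Z` into `X ⊕ Y ⊕ Z`. -/
def ι₂ : Y ⊕ Z → X ⊕ Y ⊕ Z :=
  Sum.elim (fun y => Sum.inr (Sum.inl y)) fun z => Sum.inr (Sum.inr z)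

/-- The inclusion of `X ⊕ Z` into `X ⊕ Y ⊕ Z`. -/
def ι₀ : X ⊕ Z → X ⊕ Y ⊕ Z := Sum.elim Sum.inl fun z => Sum.inr (Sum.inr z)

/-- Labeled edges in the ambient `X ⊕ Y ⊕ Z`: label `false` means
"an edge of `α`", label `true` means "an edge of `β`". -/
def EdgeMem (α : PBR X Y) (β : PBR Y Z)
    (e : Bool × (X ⊕ Y ⊕ Z) × (X ⊕ Y ⊕ Z)) : Prop :=
  if e.1 then ∃ p ∈ β, ι₂ p.1 = e.2.1 ∧ ι₂ p.2 = e.2.2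
  else ∃ p ∈ α, ι₁ p.1 = e.2.1 ∧ ι₁ p.2 = e.2.2

/-- An `(α,β)`-connected sequence: a nonempty list of labeled edges of `α`/`β`,
no two successive edges from the same PBR, endpoints matching up. -/
def IsConnSeq (α : PBR X Y) (β : PBR Y Z)
    (L : List (Bool × (X ⊕ Y ⊕ Z) × (X ⊕ Y ⊕ Z))) : Prop :=
  L ≠ [] ∧ (∀ e ∈ L, EdgeMem α β e) ∧
    L.Chain' fun e f => e.1 ≠ f.1 ∧ e.2.2 = f.2.1

/-- `L` is an `(α,β)`-connected sequence connecting `a` to `b`. -/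
def ConnectsVia (α : PBR X Y) (β : PBR Y Z)
    (L : List (Bool × (X ⊕ Y ⊕ Z) × (X ⊕ Y ⊕ Z))) (a b : X ⊕ Z) : Prop :=
  IsConnSeq α β L ∧ L.head?.map (fun e => e.2.1) = some (ι₀ a) ∧
    L.getLast?.map (fun e => e.2.2) = some (ι₀ b)

/-- Composition of partitioned binary relations. -/
def comp (β : PBR Y Z) (α : PBR X Y) : PBR X Z :=
  {p | ∃ L, ConnectsVia α β L p.1 p.2}

/-- The identity PBR `ε_X`, consisting of all edges `(x^(d), x^(c))`
and `(x^(c), x^(d))`. -/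
def eps (X : Type) : PBR X X :=
  {p | ∃ x : X, p = (Sum.inl x, Sum.inr x) ∨ p = (Sum.inr x, Sum.inl x)}

/-- A labeled edge is `(α,β)`-frothy if it is an edge of the corresponding PBR
occurring in no `(α,β)`-connected sequence connecting two elements of `X ⊕ Z`. -/
def IsFrothy (α : PBR X Y) (β : PBR Y Z)
    (e : Bool × (X ⊕ Y ⊕ Z) × (X ⊕ Y ⊕ Z)) : Prop :=
  EdgeMem α β e ∧ ∀ L a b, ConnectsVia α β L a b → e ∉ L

/-- An `(α,β)`-frothy cycle. -/
def IsFrothyCycle (α : PBR X Y) (β : PBR Y Z)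
    (L : List (Bool × (X ⊕ Y ⊕ Z) × (X ⊕ Y ⊕ Z))) : Prop :=
  IsConnSeq α β L ∧ 2 ≤ L.length ∧
    L.getLast?.map (fun e => e.2.2) = L.head?.map (fun e => e.2.1) ∧
    L.head?.map (fun e => e.1) ≠ L.getLast?.map (fun e => e.1) ∧
    ∀ e ∈ L, IsFrothy α β e

/-- The type of `(α,β)`-frothy cycles. -/
def FrothyCycles (α : PBR X Y) (β : PBR Y Z) :=
  {L : List (Bool × (X ⊕ Y ⊕ Z) × (X ⊕ Y ⊕ Z)) // IsFrothyCycle α β L}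

/-- `𝔣((α,β))`: the number of equivalence classes of `(α,β)`-frothy cycles,
where the equivalence is generated by elementary equivalence (sharing a common
edge of the same PBR); note that naive equivalence (cyclic permutation) is
subsumed, since a cycle and any of its cyclic permutations share all edges. -/
noncomputable def fPBR (α : PBR X Y) (β : PBR Y Z) : ℕ :=
  Nat.card (Quot fun L L' : FrothyCycles α β => ∃ e, e ∈ L.1 ∧ e ∈ L'.1)

/-- The inclusion `Φ₁` of binary relations into PBRs: the edges of `Φ₁(θ)`
are exactly the pairs `(x^(d), y^(c))` with `(x, y) ∈ θ`. -/
def Phi1 {X Y : Type} (θ : Set (X × Y)) : PBR X Y :=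
  {p | ∃ q ∈ θ, p = (Sum.inl q.1, Sum.inr q.2)}

/-- Usual composition of binary relations: `η∘θ = {(x,z) : ∃ y, (x,y) ∈ θ ∧ (y,z) ∈ η}`. -/
def relComp {X Y Z : Type} (η : Set (Y × Z)) (θ : Set (X × Y)) : Set (X × Z) :=
  {p | ∃ y, (p.1, y) ∈ θ ∧ (y, p.2) ∈ η}

lemma edge_shape {θ : Set (X × Y)} {η : Set (Y × Z)}
    {e : Bool × (X ⊕ Y ⊕ Z) × (X ⊕ Y ⊕ Z)}
    (h : EdgeMem (Phi1 θ) (Phi1 η) e) :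
    (e.1 = false ∧ ∃ x y, (x, y) ∈ θ ∧ e.2.1 = Sum.inl x ∧
      e.2.2 = Sum.inr (Sum.inl y)) ∨
    (e.1 = true ∧ ∃ y z, (y, z) ∈ η ∧ e.2.1 = Sum.inr (Sum.inl y) ∧
      e.2.2 = Sum.inr (Sum.inr z)) := by
  unfold EdgeMem at h
  cases hb : e.1 with
  | false =>
    rw [hb] at h
    simp only [if_neg (Bool.false_ne_true)] at h
    obtain ⟨p, ⟨q, hq, hpq⟩, h1, h2⟩ := h
    left
    refine ⟨rfl, q.1, q.2, hq, ?_, ?_⟩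
    · rw [← h1, hpq]; rfl
    · rw [← h2, hpq]; rfl
  | true =>
    rw [hb] at h
    simp only [if_pos] at h
    obtain ⟨p, ⟨q, hq, hpq⟩, h1, h2⟩ := h
    right
    refine ⟨rfl, q.1, q.2, hq, ?_, ?_⟩
    · rw [← h1, hpq]; rfl
    · rw [← h2, hpq]; rfl

/-- `Φ₁` is an inclusion of the category of binary relations into the category
of PBRs respecting composition. -/
theorem phi1_respects_comp (X Y Z : Type) [Fintype X] [Fintype Y] [Fintype Z]
    (θ : Set (X × Y)) (η : Set (Y × Z)) :
    Phi1 (relComp η θ) = comp (Phi1 η) (Phi1 θ) ∧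
    Function.Injective (Phi1 (X := X) (Y := Y)) := by
  constructor
  · ext ⟨a, b⟩
    constructor
    · rintro ⟨⟨x, z⟩, ⟨y, hθ, hη⟩, hab⟩
      simp only [Prod.mk.injEq] at hab
      obtain ⟨ha, hb⟩ := hab
      refine ⟨[(false, Sum.inl x, Sum.inr (Sum.inl y)),
               (true, Sum.inr (Sum.inl y), Sum.inr (Sum.inr z))], ?_, ?_, ?_⟩
      · refine ⟨by simp, ?_, ?_⟩
        · intro e he
          simp only [List.mem_cons, List.mem_singleton] at he
          rcases he with rfl | rfl | h
          · exact ⟨(Sum.inl x, Sum.inr y), ⟨(x, y), hθ, rfl⟩, rfl, rfl⟩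
          · exact ⟨(Sum.inl y, Sum.inr z), ⟨(y, z), hη, rfl⟩, rfl, rfl⟩
          · exact absurd h List.not_mem_nil
        · exact List.isChain_cons_cons.mpr ⟨⟨by simp, rfl⟩, List.isChain_singleton _⟩
      · simp [ha, ι₀]
      · simp [hb, ι₀, List.getLast?]
    · rintro ⟨L, ⟨⟨hne, hmem, hch⟩, hhd, hlast⟩⟩
      match L with
      | [] => exact absurd rfl hne
      | e1 :: L' =>
        have he1 := edge_shape (hmem e1 List.mem_cons_self)
        simp only [List.head?_cons, Option.map_some, Option.some.injEq] at hhd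
        -- e1 starts at ι₀ a; determine a
        rcases he1 with ⟨hb1, x, y, hθ, hs1, ht1⟩ | ⟨hb1, y, z, hη, hs1, ht1⟩
        · -- first edge is a θ-edge
          have ha : a = Sum.inl x := by
            cases a with
            | inl x' =>
              simp only [ι₀, Sum.elim_inl] at hhd
              rw [hhd] at hs1; cases hs1; rfl
            | inr z' =>
              simp only [ι₀, Sum.elim_inr] at hhd
              rw [hhd] at hs1; exact absurd hs1 (by simp)
          match L' with
          | [] =>
            exfalso
            simp only [List.getLast?_singleton, Option.map_some,
              Option.some.injEq] at hlast
            cases b with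
            | inl x' =>
              simp only [ι₀, Sum.elim_inl] at hlast
              rw [hlast] at ht1; exact absurd ht1 (by simp)
            | inr z' =>
              simp only [ι₀, Sum.elim_inr] at hlast
              rw [hlast] at ht1
              exact absurd (Sum.inr.injEq _ _ ▸ ht1) (by simp)
          | e2 :: L'' =>
            have hch2 := List.isChain_cons_cons.mp hch
            obtain ⟨⟨hlbl, hend⟩, hch'⟩ := hch2
            have he2 := edge_shape (hmem e2 (by simp))
            rcases he2 with ⟨hb2, x', y', hθ', hs2, ht2⟩ | ⟨hb2, y', z, hη, hs2, ht2⟩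
            · exfalso; rw [hb1, hb2] at hlbl; exact hlbl rfl
            · have hy : y' = y := by
                rw [ht1, hs2] at hend
                cases hend; rfl
              subst hy
              match L'' with
              | e3 :: L''' =>
                exfalso
                obtain ⟨⟨hlbl3, hend3⟩, _⟩ := List.isChain_cons_cons.mp hch'
                have he3 := edge_shape (hmem e3 (by simp))
                rcases he3 with ⟨hb3, x3, y3, _, hs3, _⟩ | ⟨hb3, y3, z3, _, hs3, _⟩
                · rw [ht2, hs3] at hend3; exact absurd hend3 (by simp)
                · rw [hb2, hb3] at hlbl3; exact hlbl3 rfl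
              | [] =>
                have hb' : b = Sum.inr z := by
                  simp only [List.getLast?_cons_cons, List.getLast?_singleton,
                    Option.map_some, Option.some.injEq] at hlast
                  cases b with
                  | inl x' =>
                    simp only [ι₀, Sum.elim_inl] at hlast
                    rw [hlast] at ht2; exact absurd ht2 (by simp)
                  | inr z' =>
                    simp only [ι₀, Sum.elim_inr] at hlast
                    rw [hlast] at ht2
                    cases ht2; rfl
                exact ⟨(x, z), ⟨y', hθ, hη⟩, by rw [ha, hb']⟩
        · -- first edge is an η-edge: impossible
          exfalso
          cases a with
          | inl x' =>
            simp only [ι₀, Sum.elim_inl] at hhd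
            rw [hhd] at hs1; exact absurd hs1 (by simp)
          | inr z' =>
            simp only [ι₀, Sum.elim_inr] at hhd
            rw [hhd] at hs1
            exact absurd (Sum.inr.injEq _ _ ▸ hs1) (by simp)
  · intro θ₁ θ₂ h
    ext ⟨x, y⟩
    have : ((Sum.inl x, Sum.inr y) ∈ Phi1 θ₁) ↔
        ((Sum.inl x, Sum.inr y) ∈ Phi1 θ₂) := by rw [h]
    simpa [Phi1, Prod.ext_iff] using this

end PBRPaper
end

section
/- Let ε̂_X denote the PBR on (X,X) whose edges are exactly (x^(d),x^(c)) for x ∈ X. For finite sets X, Y and a PBR α on (X,Y), the following are equivalent: (i) there exists a PBR β on (X,Y) such that α = ε̂_Y∘β∘ε̂_X; (ii) every edge (a,b) of α has a in the domain copy of X and b in the codomain copy of Y. Hence the image of the inclusion Φ₁ of binary relations into PBRs equals the idempotent subcategory 𝔓𝔅_e determined by the idempotents ε̂_X, i.e. Φ₁(𝔅)(X,Y) = ε̂_Y∘𝔓𝔅(X,Y)∘ε̂_X. -/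
namespace PBRPaper

variable {X Y Z : Type}

/-- The idempotent PBR `ε̂_X`, with edges exactly `(x^(d), x^(c))` for `x ∈ X`. -/
def epsHat (X : Type) : PBR X X :=
  {p | ∃ x : X, p = (Sum.inl x, Sum.inr x)}

section Aux

/-- Every edge of `comp β (epsHat X)` ends in the codomain copy. -/
lemma comp_epsHat_right_ends (β : PBR X Y) {p : (X ⊕ Y) × (X ⊕ Y)}
    (hp : p ∈ comp β (epsHat X)) : ∃ y : Y, p.2 = Sum.inr y := by
  obtain ⟨L, ⟨hne, hmem, hch⟩, hhead, hlast⟩ := hp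
  obtain ⟨e, heL, he2⟩ := Option.map_eq_some_iff.mp hlast
  have heM : e ∈ L := List.mem_of_getLast? heL
  have hE := hmem e heM
  obtain ⟨b, u, v⟩ := e
  cases b with
  | false =>
    obtain ⟨q, ⟨x, rfl⟩, h1, h2⟩ := hE
    cases hp2 : p.2 <;> simp_all [ι₀, ι₁]
  | true =>
    obtain ⟨q, hq, h1, h2⟩ := hE
    cases hq2 : q.2 <;> cases hp2 : p.2 <;> simp_all [ι₀, ι₂]

/-- If every edge of `δ` ends in the codomain copy, then every edge of
`comp (epsHat Y) δ` goes from the domain copy to the codomain copy. -/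
lemma comp_epsHat_left_form (δ : PBR X Y)
    (hδ : ∀ q ∈ δ, ∃ y : Y, q.2 = Sum.inr y)
    {p : (X ⊕ Y) × (X ⊕ Y)} (hp : p ∈ comp (epsHat Y) δ) :
    ∃ (x : X) (y : Y), p = (Sum.inl x, Sum.inr y) := by
  obtain ⟨L, ⟨hne, hmem, hch⟩, hhead, hlast⟩ := hp
  obtain ⟨e, heL, he2⟩ := Option.map_eq_some_iff.mp hlast
  obtain ⟨f, hfL, hf2⟩ := Option.map_eq_some_iff.mp hhead
  have heM : e ∈ L := List.mem_of_getLast? heL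
  have hfM : f ∈ L := List.mem_of_mem_head? hfL
  have hE := hmem e heM
  have hF := hmem f hfM
  have hx : ∃ x : X, p.1 = Sum.inl x := by
    obtain ⟨bf, uf, vf⟩ := f
    cases bf with
    | false =>
      obtain ⟨q, hq, h1, h2⟩ := hF
      cases hq1 : q.1 <;> cases hp1 : p.1 <;> simp_all [ι₀, ι₁]
    | true =>
      obtain ⟨q, ⟨y, rfl⟩, h1, h2⟩ := hF
      cases hp1 : p.1 <;> simp_all [ι₀, ι₂]
  have hy : ∃ y : Y, p.2 = Sum.inr y := by
    obtain ⟨be, ue, ve⟩ := e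
    cases be with
    | false =>
      obtain ⟨q, hq, h1, h2⟩ := hE
      obtain ⟨y, hqy⟩ := hδ q hq
      cases hp2 : p.2 <;> simp_all [ι₀, ι₁]
    | true =>
      obtain ⟨q, ⟨y, rfl⟩, h1, h2⟩ := hE
      cases hp2 : p.2 <;> simp_all [ι₀, ι₂]
  obtain ⟨x, hx⟩ := hx
  obtain ⟨y, hy⟩ := hy
  exact ⟨x, y, Prod.ext hx hy⟩

/-- If all edges of `α` go from domain copy to codomain copy, then
`comp α (epsHat X) = α`. -/
lemma comp_epsHat_right_eq (α : PBR X Y)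
    (h : ∀ p ∈ α, ∃ (x : X) (y : Y), p = (Sum.inl x, Sum.inr y)) :
    comp α (epsHat X) = α := by
  ext p
  constructor
  · rintro ⟨L, ⟨hne, hmem, hch⟩, hhead, hlast⟩
    cases L with
    | nil => exact absurd rfl hne
    | cons e L' =>
      cases L' with
      | nil =>
        -- single edge: impossible
        simp only [List.head?_cons, List.getLast?_singleton, Option.map_some] at hhead hlast
        have hE := hmem e (by simp)
        obtain ⟨b, u, v⟩ := e
        cases b with
        | false =>
          obtain ⟨q, ⟨x, rfl⟩, h1, h2⟩ := hE
          cases hp2 : p.2 <;> simp_all [ι₀, ι₁]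
        | true =>
          obtain ⟨q, hq, h1, h2⟩ := hE
          obtain ⟨x, y, rfl⟩ := h q hq
          cases hp1 : p.1 <;> simp_all [ι₀, ι₂]
      | cons f rest =>
        rw [List.Chain', List.isChain_cons_cons] at hch
        obtain ⟨⟨hlbl, heqf⟩, hch'⟩ := hch
        simp only [List.head?_cons, Option.map_some, Option.some.injEq] at hhead
        have hE := hmem e (by simp)
        obtain ⟨be, ue, ve⟩ := e
        -- first edge must be an epsHat edge
        cases be with
        | true =>
          obtain ⟨q, hq, h1, h2⟩ := hE
          obtain ⟨x, y, rfl⟩ := h q hq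
          cases hp1 : p.1 <;> simp_all [ι₀, ι₂]
        | false =>
          obtain ⟨q, ⟨x, rfl⟩, h1, h2⟩ := hE
          simp only [ι₁, Sum.elim_inl, Sum.elim_inr] at h1 h2
          have hp1 : p.1 = Sum.inl x := by
            cases hp1 : p.1 <;> simp_all [ι₀]
          -- second edge must be an α edge
          have hF := hmem f (by simp)
          obtain ⟨bf, uf, vf⟩ := f
          have hbf : bf = true := by
            cases bf <;> simp_all
          subst hbf
          obtain ⟨q', hq', h1', h2'⟩ := hF
          obtain ⟨x', y', rfl⟩ := h q' hq'
          simp only [ι₂, Sum.elim_inl, Sum.elim_inr] at h1' h2'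
          simp only at heqf
          rw [← h2, ← h1'] at heqf
          have hx' : x = x' := by simpa using heqf
          subst hx'
          -- there is no third edge
          cases rest with
          | cons g t =>
            rw [List.isChain_cons_cons] at hch'
            obtain ⟨⟨hlbl', heqg⟩, _⟩ := hch'
            have hG := hmem g (by simp)
            obtain ⟨bg, ug, vg⟩ := g
            have hbg : bg = false := by cases bg <;> simp_all
            subst hbg
            obtain ⟨q'', ⟨x'', rfl⟩, h1'', h2''⟩ := hG
            simp only [ι₁, Sum.elim_inl] at h1''
            simp only at heqg
            rw [← h2', ← h1''] at heqg
            exact absurd heqg (by simp)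
          | nil =>
            simp only [List.getLast?_cons_cons, List.getLast?_singleton,
              Option.map_some, Option.some.injEq] at hlast
            have hp2 : p.2 = Sum.inr y' := by
              rw [← h2'] at hlast
              cases hp2 : p.2 with
              | inl x0 => rw [hp2] at hlast; simp [ι₀] at hlast
              | inr y0 => rw [hp2] at hlast; simp [ι₀] at hlast; simp [hlast]
            have : p = (Sum.inl x, Sum.inr y') := Prod.ext hp1 hp2
            rw [this]; exact hq'
  · intro hp
    obtain ⟨x, y, rfl⟩ := h p hp
    refine ⟨[(false, (Sum.inl x : X ⊕ X ⊕ Y), Sum.inr (Sum.inl x)),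
             (true, Sum.inr (Sum.inl x), Sum.inr (Sum.inr y))], ⟨by simp, ?_, ?_⟩, ?_, ?_⟩
    · rintro e he
      simp only [List.mem_cons, List.mem_singleton, List.not_mem_nil, or_false] at he
      rcases he with rfl | rfl
      · exact ⟨(Sum.inl x, Sum.inr x), ⟨x, rfl⟩, rfl, rfl⟩
      · exact ⟨(Sum.inl x, Sum.inr y), hp, rfl, rfl⟩
    · exact List.isChain_cons_cons.mpr ⟨⟨by simp, rfl⟩, List.isChain_singleton _⟩
    · simp [ι₀]
    · simp [ι₀]

/-- If all edges of `α` go from domain copy to codomain copy, then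
`comp (epsHat Y) α = α`. -/
lemma comp_epsHat_left_eq (α : PBR X Y)
    (h : ∀ p ∈ α, ∃ (x : X) (y : Y), p = (Sum.inl x, Sum.inr y)) :
    comp (epsHat Y) α = α := by
  ext p
  constructor
  · rintro ⟨L, ⟨hne, hmem, hch⟩, hhead, hlast⟩
    cases L with
    | nil => exact absurd rfl hne
    | cons e L' =>
      cases L' with
      | nil =>
        simp only [List.head?_cons, List.getLast?_singleton, Option.map_some] at hhead hlast
        have hE := hmem e (by simp)
        obtain ⟨b, u, v⟩ := e
        cases b with
        | false =>
          obtain ⟨q, hq, h1, h2⟩ := hE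
          obtain ⟨x, y, rfl⟩ := h q hq
          cases hp2 : p.2 <;> simp_all [ι₀, ι₁]
        | true =>
          obtain ⟨q, ⟨y, rfl⟩, h1, h2⟩ := hE
          cases hp1 : p.1 <;> simp_all [ι₀, ι₂]
      | cons f rest =>
        rw [List.Chain', List.isChain_cons_cons] at hch
        obtain ⟨⟨hlbl, heqf⟩, hch'⟩ := hch
        simp only [List.head?_cons, Option.map_some, Option.some.injEq] at hhead
        have hE := hmem e (by simp)
        obtain ⟨be, ue, ve⟩ := e
        -- first edge must be an α edge
        cases be with
        | true =>
          obtain ⟨q, ⟨y, rfl⟩, h1, h2⟩ := hE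
          cases hp1 : p.1 <;> simp_all [ι₀, ι₂]
        | false =>
          obtain ⟨q, hq, h1, h2⟩ := hE
          obtain ⟨x, y, rfl⟩ := h q hq
          simp only [ι₁, Sum.elim_inl, Sum.elim_inr] at h1 h2
          have hp1 : p.1 = Sum.inl x := by
            cases hp1 : p.1 <;> simp_all [ι₀]
          -- second edge must be an epsHat edge
          have hF := hmem f (by simp)
          obtain ⟨bf, uf, vf⟩ := f
          have hbf : bf = true := by cases bf <;> simp_all
          subst hbf
          obtain ⟨q', ⟨y', rfl⟩, h1', h2'⟩ := hF
          simp only [ι₂, Sum.elim_inl, Sum.elim_inr] at h1' h2'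
          simp only at heqf
          rw [← h2, ← h1'] at heqf
          have hy' : y = y' := by simpa using heqf
          subst hy'
          -- there is no third edge
          cases rest with
          | cons g t =>
            rw [List.isChain_cons_cons] at hch'
            obtain ⟨⟨hlbl', heqg⟩, _⟩ := hch'
            have hG := hmem g (by simp)
            obtain ⟨bg, ug, vg⟩ := g
            have hbg : bg = false := by cases bg <;> simp_all
            subst hbg
            obtain ⟨q'', hq'', h1'', h2''⟩ := hG
            obtain ⟨x'', y'', rfl⟩ := h q'' hq''
            simp only [ι₁, Sum.elim_inl] at h1''
            simp only at heqg
            rw [← h2', ← h1''] at heqg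
            exact absurd heqg (by simp)
          | nil =>
            simp only [List.getLast?_cons_cons, List.getLast?_singleton,
              Option.map_some, Option.some.injEq] at hlast
            have hp2 : p.2 = Sum.inr y := by
              rw [← h2'] at hlast
              cases hp2 : p.2 with
              | inl x0 => rw [hp2] at hlast; simp [ι₀] at hlast
              | inr y0 => rw [hp2] at hlast; simp [ι₀] at hlast; simp [hlast]
            have : p = (Sum.inl x, Sum.inr y) := Prod.ext hp1 hp2
            rw [this]; exact hq
  · intro hp
    obtain ⟨x, y, rfl⟩ := h p hp
    refine ⟨[(false, (Sum.inl x : X ⊕ Y ⊕ Y), Sum.inr (Sum.inl y)),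
             (true, Sum.inr (Sum.inl y), Sum.inr (Sum.inr y))], ⟨by simp, ?_, ?_⟩, ?_, ?_⟩
    · rintro e he
      simp only [List.mem_cons, List.mem_singleton, List.not_mem_nil, or_false] at he
      rcases he with rfl | rfl
      · exact ⟨(Sum.inl x, Sum.inr y), hp, rfl, rfl⟩
      · exact ⟨(Sum.inl y, Sum.inr y), ⟨y, rfl⟩, rfl, rfl⟩
    · exact List.isChain_cons_cons.mpr ⟨⟨by simp, rfl⟩, List.isChain_singleton _⟩
    · simp [ι₀]
    · simp [ι₀]

end Aux

/-- A PBR `α` on `(X,Y)` is of the form `ε̂_Y ∘ β ∘ ε̂_X` iff every edge of `α`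
goes from the domain copy of `X` to the codomain copy of `Y`;
hence `Φ₁(𝔅)(X,Y) = ε̂_Y ∘ 𝔓𝔅(X,Y) ∘ ε̂_X`. -/
theorem phi1_image_is_idempotent_subcategory
    (X Y : Type) [Fintype X] [Fintype Y] (α : PBR X Y) :
    ((∃ β : PBR X Y, α = comp (epsHat Y) (comp β (epsHat X))) ↔
      ∀ p ∈ α, ∃ (x : X) (y : Y), p = (Sum.inl x, Sum.inr y)) ∧
    ((∃ θ : Set (X × Y), α = Phi1 θ) ↔
      ∃ β : PBR X Y, α = comp (epsHat Y) (comp β (epsHat X))) := by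
  have main : (∃ β : PBR X Y, α = comp (epsHat Y) (comp β (epsHat X))) ↔
      ∀ p ∈ α, ∃ (x : X) (y : Y), p = (Sum.inl x, Sum.inr y) := by
    constructor
    · rintro ⟨β, rfl⟩ p hp
      exact comp_epsHat_left_form _ (fun q hq => comp_epsHat_right_ends β hq) hp
    · intro h
      refine ⟨α, ?_⟩
      rw [comp_epsHat_right_eq α h, comp_epsHat_left_eq α h]
  refine ⟨main, ?_⟩
  rw [main]
  constructor
  · rintro ⟨θ, rfl⟩ p hp
    obtain ⟨q, hq, rfl⟩ := hp
    exact ⟨q.1, q.2, rfl⟩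
  · intro h
    refine ⟨{q | (Sum.inl q.1, Sum.inr q.2) ∈ α}, ?_⟩
    ext p
    constructor
    · intro hp
      obtain ⟨x, y, rfl⟩ := h p hp
      exact ⟨(x, y), hp, rfl⟩
    · rintro ⟨q, hq, rfl⟩
      exact hq

end PBRPaper
end

section
/- For a binary relation θ ⊆ X×Y between finite sets, let Φ₂(θ) be the PBR on (X,Y) whose edges are exactly (x^(d),y^(c)) and (y^(c),x^(d)) for all (x,y) ∈ θ. Then: (i) Φ₂ of the equality relation on X equals ε_X; (ii) for all θ ⊆ X×Y and η ⊆ Y×Z one has Φ₂(η∘θ) = Φ₂(η)∘Φ₂(θ), where η∘θ = {(x,z) : ∃y, (x,y) ∈ θ and (y,z) ∈ η} is relation composition and the right-hand composition is PBR composition; (iii) Φ₂ is injective on each hom set. Hence Φ₂ is a faithful functor from the category of binary relations to the category of PBRs. -/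
namespace PBRPaper

variable {X Y Z : Type}

/-- The map `Φ₂`: the edges of `Φ₂(θ)` are exactly `(x^(d), y^(c))` and
`(y^(c), x^(d))` for `(x, y) ∈ θ`. -/
def Phi2 {X Y : Type} (θ : Set (X × Y)) : PBR X Y :=
  {p | ∃ q ∈ θ, p = (Sum.inl q.1, Sum.inr q.2) ∨ p = (Sum.inr q.2, Sum.inl q.1)}

section Aux

variable {X Y Z : Type}

lemma false_edge_shape {θ : Set (X × Y)} {η : Set (Y × Z)}
    {u v : X ⊕ Y ⊕ Z} (h : EdgeMem (Phi2 θ) (Phi2 η) (false, u, v)) :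
    (∃ x y, (x, y) ∈ θ ∧ u = Sum.inl x ∧ v = Sum.inr (Sum.inl y)) ∨
    (∃ x y, (x, y) ∈ θ ∧ u = Sum.inr (Sum.inl y) ∧ v = Sum.inl x) := by
  simp only [EdgeMem, if_neg Bool.false_ne_true] at h
  obtain ⟨p, hp, h1, h2⟩ := h
  obtain ⟨q, hq, hpq | hpq⟩ := hp <;> subst hpq <;> simp only [ι₁, Sum.elim_inl,
    Sum.elim_inr] at h1 h2
  · exact Or.inl ⟨q.1, q.2, hq, h1.symm, h2.symm⟩
  · exact Or.inr ⟨q.1, q.2, hq, h1.symm, h2.symm⟩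

lemma true_edge_shape {θ : Set (X × Y)} {η : Set (Y × Z)}
    {u v : X ⊕ Y ⊕ Z} (h : EdgeMem (Phi2 θ) (Phi2 η) (true, u, v)) :
    (∃ y z, (y, z) ∈ η ∧ u = Sum.inr (Sum.inl y) ∧ v = Sum.inr (Sum.inr z)) ∨
    (∃ y z, (y, z) ∈ η ∧ u = Sum.inr (Sum.inr z) ∧ v = Sum.inr (Sum.inl y)) := by
  simp only [EdgeMem, if_pos rfl] at h
  obtain ⟨p, hp, h1, h2⟩ := h
  obtain ⟨q, hq, hpq | hpq⟩ := hp <;> subst hpq <;> simp only [ι₂, Sum.elim_inl,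
    Sum.elim_inr] at h1 h2
  · exact Or.inl ⟨q.1, q.2, hq, h1.symm, h2.symm⟩
  · exact Or.inr ⟨q.1, q.2, hq, h1.symm, h2.symm⟩

/-- `ι₀` never hits `Sum.inr (Sum.inl y)`. -/
lemma iota0_ne_mid (a : X ⊕ Z) (y : Y) : ι₀ a ≠ Sum.inr (Sum.inl y) := by
  cases a <;> simp [ι₀]

end Aux

/-- `Φ₂` is a faithful functor from binary relations to PBRs: it sends the
equality relation to the identity PBR, respects composition, and is injective
on each hom set. -/
theorem phi2_faithful_functor (X Y Z : Type) [Fintype X] [Fintype Y] [Fintype Z] :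
    Phi2 {p : X × X | p.1 = p.2} = eps X ∧
    (∀ (θ : Set (X × Y)) (η : Set (Y × Z)),
      Phi2 (relComp η θ) = comp (Phi2 η) (Phi2 θ)) ∧
    Function.Injective (Phi2 (X := X) (Y := Y)) := by
  refine ⟨?_, ?_, ?_⟩
  · -- identity
    ext p
    constructor
    · rintro ⟨⟨a, b⟩, hab, h⟩
      simp only [Set.mem_setOf_eq] at hab
      subst hab
      exact ⟨a, h⟩
    · rintro ⟨x, h⟩
      exact ⟨(x, x), rfl, h⟩
  · -- composition
    intro θ η
    ext p
    constructor
    · rintro ⟨⟨x, z⟩, ⟨y, hθ, hη⟩, hp | hp⟩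
      · refine ⟨[(false, Sum.inl x, Sum.inr (Sum.inl y)),
          (true, Sum.inr (Sum.inl y), Sum.inr (Sum.inr z))], ⟨⟨by simp, ?_, ?_⟩, ?_, ?_⟩⟩
        · intro e he
          simp only [List.mem_cons, List.not_mem_nil, or_false] at he
          rcases he with rfl | rfl
          · simp only [EdgeMem, if_neg Bool.false_ne_true]
            exact ⟨(Sum.inl x, Sum.inr y), ⟨(x, y), hθ, Or.inl rfl⟩, by simp [ι₁]⟩
          · simp only [EdgeMem, if_pos rfl]
            exact ⟨(Sum.inl y, Sum.inr z), ⟨(y, z), hη, Or.inl rfl⟩, by simp [ι₂]⟩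
        · simp [List.Chain']
        · simp [hp, ι₀]
        · simp [hp, ι₀]
      · refine ⟨[(true, Sum.inr (Sum.inr z), Sum.inr (Sum.inl y)),
          (false, Sum.inr (Sum.inl y), Sum.inl x)], ⟨⟨by simp, ?_, ?_⟩, ?_, ?_⟩⟩
        · intro e he
          simp only [List.mem_cons, List.not_mem_nil, or_false] at he
          rcases he with rfl | rfl
          · simp only [EdgeMem, if_pos rfl]
            exact ⟨(Sum.inr z, Sum.inl y), ⟨(y, z), hη, Or.inr rfl⟩, by simp [ι₂]⟩
          · simp only [EdgeMem, if_neg Bool.false_ne_true]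
            exact ⟨(Sum.inr y, Sum.inl x), ⟨(x, y), hθ, Or.inr rfl⟩, by simp [ι₁]⟩
        · simp [List.Chain']
        · simp [hp, ι₀]
        · simp [hp, ι₀]
    · rintro ⟨L, ⟨hne, hmem, hch⟩, hhead, hlast⟩
      match L with
      | [] => exact absurd rfl hne
      | [(b1, u1, v1)] =>
        -- length 1 is impossible
        exfalso
        simp only [List.head?, List.getLast?, Option.map_some] at hhead hlast
        have h1 : u1 = ι₀ p.1 := by injection hhead
        have h2 : v1 = ι₀ p.2 := by injection hlast
        have he := hmem _ (List.mem_singleton_self _)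
        cases b1
        · rcases false_edge_shape he with ⟨x, y, _, _, hv⟩ | ⟨x, y, _, hu, _⟩
          · exact absurd (h2 ▸ hv) (iota0_ne_mid p.2 y)
          · exact absurd (h1 ▸ hu) (iota0_ne_mid p.1 y)
        · rcases true_edge_shape he with ⟨y, z, _, hu, _⟩ | ⟨y, z, _, _, hv⟩
          · exact absurd (h1 ▸ hu) (iota0_ne_mid p.1 y)
          · exact absurd (h2 ▸ hv) (iota0_ne_mid p.2 y)
      | (b1, u1, v1) :: (b2, u2, v2) :: L'' =>
        have hch1 := hch
        unfold List.Chain' at hch1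
        rw [List.isChain_cons_cons] at hch1
        obtain ⟨⟨hb12, hv1u2⟩, hch2⟩ := hch1
        simp only at hb12 hv1u2
        have h1 : u1 = ι₀ p.1 := by
          simp only [List.head?, Option.map_some] at hhead
          injection hhead
        have he1 := hmem _ (List.mem_cons_self)
        have he2 := hmem _ (List.mem_cons_of_mem _ (List.mem_cons_self))
        match L'' with
        | [] =>
          have h2 : v2 = ι₀ p.2 := by
            simp only [List.getLast?, Option.map_some] at hlast
            injection hlast
          cases b1
          · -- e1 from θ, e2 from η
            rcases false_edge_shape he1 with ⟨x, y, hθ, hu1, hv1⟩ | ⟨x, y, _, hu1, _⟩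
            · have hb2 : b2 = true := by
                cases b2 <;> simp_all
              subst hb2
              rcases true_edge_shape he2 with ⟨y', z, hη, hu2, hv2⟩ | ⟨y', z, _, hu2, _⟩
              · have hyy : y = y' := by
                  rw [hv1, hu2] at hv1u2
                  injection hv1u2 with h; injection h
                subst hyy
                have hp1 : p.1 = Sum.inl x := by
                  cases hp : p.1 <;> rw [hp] at h1 <;> simp [ι₀] at h1
                  · rw [hu1] at h1; injection h1 with h; exact h ▸ rfl
                  · rw [hu1] at h1; simp at h1
                have hp2 : p.2 = Sum.inr z := by
                  cases hp : p.2 <;> rw [hp] at h2 <;> simp [ι₀] at h2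
                  · rw [hv2] at h2; simp at h2
                  · rw [hv2] at h2
                    injection h2 with h; injection h with h'; exact h' ▸ rfl
                exact ⟨(x, z), ⟨y, hθ, hη⟩, Or.inl (by rw [← hp1, ← hp2])⟩
              · rw [hv1, hu2] at hv1u2
                injection hv1u2 with h; simp at h
            · exact absurd (h1 ▸ hu1) (iota0_ne_mid p.1 y)
          · -- e1 from η, e2 from θ
            rcases true_edge_shape he1 with ⟨y, z, _, hu1, _⟩ | ⟨y, z, hη, hu1, hv1⟩
            · exact absurd (h1 ▸ hu1) (iota0_ne_mid p.1 y)
            · have hb2 : b2 = false := by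
                cases b2 <;> simp_all
              subst hb2
              rcases false_edge_shape he2 with ⟨x, y', _, hu2, _⟩ | ⟨x, y', hθ, hu2, hv2⟩
              · rw [hv1, hu2] at hv1u2; simp at hv1u2
              · have hyy : y = y' := by
                  rw [hv1, hu2] at hv1u2
                  injection hv1u2 with h; injection h
                subst hyy
                have hp1 : p.1 = Sum.inr z := by
                  cases hp : p.1 <;> rw [hp] at h1 <;> simp [ι₀] at h1
                  · rw [hu1] at h1; simp at h1
                  · rw [hu1] at h1
                    injection h1 with h; injection h with h'; exact h' ▸ rfl
                have hp2 : p.2 = Sum.inl x := by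
                  cases hp : p.2 <;> rw [hp] at h2 <;> simp [ι₀] at h2
                  · rw [hv2] at h2; injection h2 with h; exact h ▸ rfl
                  · rw [hv2] at h2; simp at h2
                exact ⟨(x, z), ⟨y, hθ, hη⟩, Or.inr (by rw [← hp1, ← hp2])⟩
        | (b3, u3, v3) :: L''' =>
          -- length ≥ 3 is impossible
          exfalso
          rw [List.isChain_cons_cons] at hch2
          obtain ⟨⟨hb23, hv2u3⟩, _⟩ := hch2
          simp only at hb23 hv2u3
          have he3 := hmem _ (List.mem_cons_of_mem _ (List.mem_cons_of_mem _
            (List.mem_cons_self)))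
          cases b1
          · rcases false_edge_shape he1 with ⟨x, y, _, hu1, hv1⟩ | ⟨x, y, _, hu1, _⟩
            · have hb2 : b2 = true := by cases b2 <;> simp_all
              subst hb2
              have hb3 : b3 = false := by cases b3 <;> simp_all
              subst hb3
              rcases true_edge_shape he2 with ⟨y', z, _, hu2, hv2⟩ | ⟨y', z, _, hu2, _⟩
              · rcases false_edge_shape he3 with ⟨x', y'', _, hu3, _⟩ | ⟨x', y'', _, hu3, _⟩
                · rw [hv2, hu3] at hv2u3; simp at hv2u3
                · rw [hv2, hu3] at hv2u3; injection hv2u3 with h; simp at h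
              · rw [hv1, hu2] at hv1u2; injection hv1u2 with h; simp at h
            · exact absurd (h1 ▸ hu1) (iota0_ne_mid p.1 y)
          · rcases true_edge_shape he1 with ⟨y, z, _, hu1, _⟩ | ⟨y, z, _, hu1, hv1⟩
            · exact absurd (h1 ▸ hu1) (iota0_ne_mid p.1 y)
            · have hb2 : b2 = false := by cases b2 <;> simp_all
              subst hb2
              have hb3 : b3 = true := by cases b3 <;> simp_all
              subst hb3
              rcases false_edge_shape he2 with ⟨x, y', _, hu2, _⟩ | ⟨x, y', _, hu2, hv2⟩
              · rw [hv1, hu2] at hv1u2; simp at hv1u2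
              · rcases true_edge_shape he3 with ⟨y'', z', _, hu3, _⟩ | ⟨y'', z', _, hu3, _⟩
                · rw [hv2, hu3] at hv2u3; simp at hv2u3
                · rw [hv2, hu3] at hv2u3; simp at hv2u3
  · -- injectivity
    have key : ∀ (σ : Set (X × Y)) (x : X) (y : Y),
        (x, y) ∈ σ ↔ (Sum.inl x, Sum.inr y) ∈ Phi2 σ := by
      intro σ x y
      constructor
      · intro h
        exact ⟨(x, y), h, Or.inl rfl⟩
      · rintro ⟨⟨a, b⟩, hab, h | h⟩
        · obtain ⟨h1, h2⟩ := Prod.mk.injEq .. ▸ h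
          injection h1 with h1; injection h2 with h2
          exact h1 ▸ h2 ▸ hab
        · obtain ⟨h1, _⟩ := Prod.mk.injEq .. ▸ h
          simp at h1
    intro θ θ' h
    ext ⟨x, y⟩
    rw [key θ x y, key θ' x y, h]

end PBRPaper
end

section
/- Let α be an equivalence relation on X ⊕ Y and β an equivalence relation on Y ⊕ Z (X, Y, Z finite sets), regarded as PBRs on (X,Y) and (Y,Z) respectively. Then for all a, b ∈ X ⊕ Z, the PBR composition β∘α contains the edge (a,b) if and only if there exist k ∈ ℕ₀ and a sequence a = a₀, a₁, …, a_k = b of elements of X ⊕ Y ⊕ Z such that every two consecutive elements a_i, a_{i+1} are related by α or by β (regarded inside X ⊕ Y ⊕ Z). In particular, the PBR composition of two equivalence relations equals the PBR associated to the composition of the corresponding partitions in the partition category, so the assignment Ψ sending a partition to its equivalence relation respects composition. -/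
namespace PBRPaper

variable {X Y Z : Type}

/-- Two elements of `X ⊕ Y ⊕ Z` are related by `α` or by `β`
(each regarded inside `X ⊕ Y ⊕ Z`). -/
def step {X Y Z : Type} (α : PBR X Y) (β : PBR Y Z) (u v : X ⊕ Y ⊕ Z) : Prop :=
  (∃ p ∈ α, ι₁ p.1 = u ∧ ι₁ p.2 = v) ∨ (∃ p ∈ β, ι₂ p.1 = u ∧ ι₂ p.2 = v)

section Aux

lemma iota1_inj : Function.Injective (ι₁ : X ⊕ Y → X ⊕ Y ⊕ Z) := by
  intro a b h; cases a <;> cases b <;> simp [ι₁] at h <;> simp [h]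

lemma iota2_inj : Function.Injective (ι₂ : Y ⊕ Z → X ⊕ Y ⊕ Z) := by
  intro a b h; cases a <;> cases b <;> simp [ι₂] at h <;> simp [h]

/-- Connectivity by a connected sequence between two ambient points. -/
def Q (α : PBR X Y) (β : PBR Y Z) (u v : X ⊕ Y ⊕ Z) : Prop :=
  ∃ L, IsConnSeq α β L ∧ L.head?.map (fun e => e.2.1) = some u ∧
    L.getLast?.map (fun e => e.2.2) = some v

lemma step_of_edgeMem {α : PBR X Y} {β : PBR Y Z}
    {e : Bool × (X ⊕ Y ⊕ Z) × (X ⊕ Y ⊕ Z)} (h : EdgeMem α β e) :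
    step α β e.2.1 e.2.2 := by
  obtain ⟨b, u, v⟩ := e
  cases b <;> simp [EdgeMem] at h
  · exact Or.inl (by simpa using h)
  · exact Or.inr (by simpa using h)

lemma edgeMem_of_step {α : PBR X Y} {β : PBR Y Z} {u v : X ⊕ Y ⊕ Z}
    (h : step α β u v) : ∃ b : Bool, EdgeMem α β (b, u, v) := by
  rcases h with h | h
  · exact ⟨false, by simpa [EdgeMem] using h⟩
  · exact ⟨true, by simpa [EdgeMem] using h⟩

lemma Q_single {α : PBR X Y} {β : PBR Y Z}
    {e : Bool × (X ⊕ Y ⊕ Z) × (X ⊕ Y ⊕ Z)} (h : EdgeMem α β e) :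
    Q α β e.2.1 e.2.2 :=
  ⟨[e], ⟨by simp, by simpa using h, List.isChain_singleton e⟩, by simp, by simp⟩

lemma Q_refl {α : PBR X Y} {β : PBR Y Z}
    (hα : Equivalence fun a b : X ⊕ Y => (a, b) ∈ α)
    (hβ : Equivalence fun a b : Y ⊕ Z => (a, b) ∈ β) (a : X ⊕ Z) :
    Q α β (ι₀ a) (ι₀ a) := by
  cases a with
  | inl x =>
      have : EdgeMem α β (false, ι₀ (Sum.inl x : X ⊕ Z), ι₀ (Sum.inl x)) := by
        simp only [EdgeMem, if_neg Bool.false_ne_true]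
        exact ⟨(Sum.inl x, Sum.inl x), hα.refl _, by simp [ι₁, ι₀], by simp [ι₁, ι₀]⟩
      exact Q_single this
  | inr z =>
      have : EdgeMem α β (true, ι₀ (Sum.inr z : X ⊕ Z), ι₀ (Sum.inr z)) := by
        simp only [EdgeMem, if_pos rfl]
        exact ⟨(Sum.inr z, Sum.inr z), hβ.refl _, by simp [ι₂, ι₀], by simp [ι₂, ι₀]⟩
      exact Q_single this

lemma Q_tail {α : PBR X Y} {β : PBR Y Z}
    (hα : Equivalence fun a b : X ⊕ Y => (a, b) ∈ α)
    (hβ : Equivalence fun a b : Y ⊕ Z => (a, b) ∈ β)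
    {u w v : X ⊕ Y ⊕ Z} (hq : Q α β u w) (hs : step α β w v) : Q α β u v := by
  obtain ⟨L, ⟨hne, hmem, hch⟩, hhead, hlast⟩ := hq
  obtain ⟨lab, hf⟩ := edgeMem_of_step hs
  set e := L.getLast hne with he
  have hLdec : L.dropLast ++ [e] = L := List.dropLast_append_getLast hne
  have hlast' : L.getLast? = some e := List.getLast?_eq_getLast hne
  have hew : e.2.2 = w := by
    rw [hlast', Option.map_some] at hlast
    exact Option.some_injective _ hlast
  by_cases hlab : lab = e.1
  · -- merge last edge with the new edge
    have hEe : EdgeMem α β e := hmem e (List.getLast_mem hne)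
    have hmerge : EdgeMem α β (lab, e.2.1, v) := by
      subst hlab
      rcases hb : e.1 with _ | _
      · have hEe' : ∃ p ∈ α, ι₁ p.1 = e.2.1 ∧ ι₁ p.2 = e.2.2 := by
          simpa [EdgeMem, hb] using hEe
        have hf' : ∃ q ∈ α, ι₁ q.1 = w ∧ ι₁ q.2 = v := by
          simpa [EdgeMem, hb] using hf
        obtain ⟨p, hp, hp1, hp2⟩ := hEe'
        obtain ⟨q, hq', hq1, hq2⟩ := hf'
        have hpq : p.2 = q.1 := iota1_inj (by rw [hp2, hq1, hew])
        exact (by simp [EdgeMem] :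
          (∃ r ∈ α, ι₁ r.1 = e.2.1 ∧ ι₁ r.2 = v) →
            EdgeMem α β (false, e.2.1, v))
          ⟨(p.1, q.2), hα.trans hp (hpq ▸ hq'), hp1, hq2⟩
      · have hEe' : ∃ p ∈ β, ι₂ p.1 = e.2.1 ∧ ι₂ p.2 = e.2.2 := by
          simpa [EdgeMem, hb] using hEe
        have hf' : ∃ q ∈ β, ι₂ q.1 = w ∧ ι₂ q.2 = v := by
          simpa [EdgeMem, hb] using hf
        obtain ⟨p, hp, hp1, hp2⟩ := hEe'
        obtain ⟨q, hq', hq1, hq2⟩ := hf'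
        have hpq : p.2 = q.1 := iota2_inj (by rw [hp2, hq1, hew])
        exact (by simp [EdgeMem] :
          (∃ r ∈ β, ι₂ r.1 = e.2.1 ∧ ι₂ r.2 = v) →
            EdgeMem α β (true, e.2.1, v))
          ⟨(p.1, q.2), hβ.trans hp (hpq ▸ hq'), hp1, hq2⟩
    refine ⟨L.dropLast ++ [(lab, e.2.1, v)], ⟨by simp, ?_, ?_⟩, ?_, by simp⟩
    · intro f hfm
      rcases List.mem_append.mp hfm with h | h
      · exact hmem f (List.dropLast_sublist L |>.mem h)
      · simpa [List.mem_singleton.mp h] using hmerge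
    · have hch' : (L.dropLast ++ [e]).Chain' _ := hLdec ▸ hch
      unfold List.Chain' at hch' ⊢
      rw [List.isChain_append] at hch' ⊢
      refine ⟨hch'.1, List.isChain_singleton _, ?_⟩
      intro x hx y hy
      have := hch'.2.2 x hx e (by simp)
      simp only [List.head?_cons, Option.mem_def, Option.some.injEq] at hy
      subst hy
      exact ⟨by simpa [hlab] using this.1, this.2⟩
    · rcases hM : L.dropLast with _ | ⟨f, M'⟩
      · have hL : L = [e] := by rw [← hLdec, hM]; simp
        rw [hL] at hhead
        simpa using hhead
      · rw [← hLdec, hM] at hhead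
        simpa using hhead
  · -- append the new edge
    refine ⟨L ++ [(lab, w, v)], ⟨by simp, ?_, ?_⟩, ?_, by simp⟩
    · intro f hfm
      rcases List.mem_append.mp hfm with h | h
      · exact hmem f h
      · simpa [List.mem_singleton.mp h] using hf
    · unfold List.Chain'
      rw [List.isChain_append]
      refine ⟨hch, List.isChain_singleton _, ?_⟩
      intro x hx y hy
      rw [hlast'] at hx
      simp only [Option.mem_def, Option.some.injEq] at hx
      simp only [List.head?_cons, Option.mem_def, Option.some.injEq] at hy
      subst hx; subst hy
      exact ⟨fun h => hlab h.symm, hew⟩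
    · rcases L with _ | ⟨f, M⟩
      · exact absurd rfl hne
      · simpa using hhead

lemma rtg_of_Q {α : PBR X Y} {β : PBR Y Z} :
    ∀ (L : List (Bool × (X ⊕ Y ⊕ Z) × (X ⊕ Y ⊕ Z))) (u v : X ⊕ Y ⊕ Z),
      (∀ e ∈ L, EdgeMem α β e) →
      (L.Chain' fun e f => e.1 ≠ f.1 ∧ e.2.2 = f.2.1) →
      L.head?.map (fun e => e.2.1) = some u →
      L.getLast?.map (fun e => e.2.2) = some v →
      Relation.ReflTransGen (step α β) u v := by
  intro L
  induction L with
  | nil => intro u v _ _ h; simp at h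
  | cons e rest ih =>
      intro u v hmem hch hhead hlast
      have hu : u = e.2.1 := by simpa using hhead.symm
      have hstep : step α β e.2.1 e.2.2 := step_of_edgeMem (hmem e (by simp))
      rcases rest with _ | ⟨f, rest'⟩
      · have hv : v = e.2.2 := by simpa using hlast.symm
        subst hu; subst hv
        exact Relation.ReflTransGen.single hstep
      · have hch' := List.isChain_cons_cons.mp hch
        have hef : e.2.2 = f.2.1 := hch'.1.2
        have := ih e.2.2 v (fun x hx => hmem x (by simp [hx] )) hch'.2
          (by simp [← hef]) (by simpa [List.getLast?_cons_cons] using hlast)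
        subst hu
        exact Relation.ReflTransGen.head hstep this

lemma rtg_of_path {V : Type} {r : V → V → Prop} :
    ∀ (k : ℕ) (c : Fin (k + 1) → V),
      (∀ i : Fin k, r (c i.castSucc) (c i.succ)) →
      Relation.ReflTransGen r (c 0) (c (Fin.last k)) := by
  intro k
  induction k with
  | zero =>
      intro c _
      have h0 : (Fin.last 0) = (0 : Fin 1) := rfl
      rw [h0]
  | succ k ih =>
      intro c hs
      have h1 : r (c 0) (c ((0 : Fin (k + 1)).succ)) := by
        simpa using hs 0
      have h2 := ih (fun i => c i.succ) (fun i => by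
        simpa [← Fin.succ_castSucc] using hs i.succ)
      have := Relation.ReflTransGen.head h1 h2
      simpa [Fin.succ_last] using this

lemma path_iff_rtg {V : Type} (r : V → V → Prop) (u v : V) :
    (∃ (k : ℕ) (c : Fin (k + 1) → V),
        c 0 = u ∧ c (Fin.last k) = v ∧
        ∀ i : Fin k, r (c i.castSucc) (c i.succ)) ↔
      Relation.ReflTransGen r u v := by
  constructor
  · rintro ⟨k, c, h0, hl, hs⟩
    rw [← h0, ← hl]
    exact rtg_of_path k c hs
  · intro h
    induction h with
    | refl => exact ⟨0, fun _ => u, rfl, rfl, fun i => i.elim0⟩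
    | @tail w v' hws hsv ih =>
        obtain ⟨k, c, h0, hl, hs⟩ := ih
        refine ⟨k + 1, Fin.snoc c v', ?_, ?_, ?_⟩
        · rw [show (0 : Fin (k + 2)) = Fin.castSucc 0 from rfl, Fin.snoc_castSucc]
          exact h0
        · exact Fin.snoc_last _ _
        · intro i
          refine Fin.lastCases ?_ (fun j => ?_) i
          · rw [Fin.succ_last, Fin.snoc_last, Fin.snoc_castSucc, hl]
            exact hsv
          · rw [Fin.succ_castSucc, Fin.snoc_castSucc, Fin.snoc_castSucc]
            exact hs j

end Aux
/-- For equivalence relations `α` on `X ⊕ Y` and `β` on `Y ⊕ Z` regarded as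
PBRs, the PBR composition `β∘α` contains `(a,b)` iff `a` and `b` are joined by
a finite sequence in `X ⊕ Y ⊕ Z` whose consecutive members are related by `α`
or by `β`; so the assignment `Ψ` from partitions to PBRs respects composition. -/
theorem pbr_comp_of_equivalences (X Y Z : Type) [Fintype X] [Fintype Y] [Fintype Z]
    (α : PBR X Y) (β : PBR Y Z)
    (hα : Equivalence fun a b : X ⊕ Y => (a, b) ∈ α)
    (hβ : Equivalence fun a b : Y ⊕ Z => (a, b) ∈ β) :
    ∀ a b : X ⊕ Z, (a, b) ∈ comp β α ↔
      ∃ (k : ℕ) (c : Fin (k + 1) → X ⊕ Y ⊕ Z),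
        c 0 = ι₀ a ∧ c (Fin.last k) = ι₀ b ∧
        ∀ i : Fin k, step α β (c i.castSucc) (c i.succ) := by
  intro a b
  constructor
  · rintro ⟨L, ⟨hne, hmem, hch⟩, hhead, hlast⟩
    exact (path_iff_rtg _ _ _).mpr (rtg_of_Q L _ _ hmem hch hhead hlast)
  · intro h
    have hrtg := (path_iff_rtg (step α β) (ι₀ a) (ι₀ b)).mp h
    have key : ∀ v, Relation.ReflTransGen (step α β) (ι₀ a) v → Q α β (ι₀ a) v := by
      intro v hv
      induction hv with
      | refl => exact Q_refl hα hβ a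
      | tail _ hs ih => exact Q_tail hα hβ ih hs
    have hq : Q α β (ι₀ a) (ι₀ b) := key _ hrtg
    obtain ⟨L, h1, h2, h3⟩ := hq
    exact ⟨L, h1, h2, h3⟩

end PBRPaper
end

section
/- Let ℵ be a composable sequence of PBRs and let ω' and ω'' be equivalent ℵ-frothy cycles. Then there exists an ℵ-frothy cycle ω containing all the edges of ω' and all the edges of ω'' (each edge occurring in ω as an edge of the same PBR of ℵ as in ω', respectively ω''). -/
namespace PBRPaper

variable {k : ℕ}

/-- The ambient disjoint union `X₁ ⊕ ⋯ ⊕ X_{k+1}` of a composable sequence. -/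
def Amb (Xs : Fin (k + 1) → Type) : Type := (j : Fin (k + 1)) × Xs j

/-- The inclusion of `X_i ⊕ X_{i+1}` into the ambient disjoint union. -/
def embG (Xs : Fin (k + 1) → Type) (i : Fin k) :
    Xs i.castSucc ⊕ Xs i.succ → Amb Xs :=
  Sum.elim (fun a => ⟨i.castSucc, a⟩) fun a => ⟨i.succ, a⟩

/-- The inclusion of `X₁ ⊕ X_{k+1}` into the ambient disjoint union. -/
def outerG (Xs : Fin (k + 1) → Type) : Xs 0 ⊕ Xs (Fin.last k) → Amb Xs :=
  Sum.elim (fun a => ⟨0, a⟩) fun a => ⟨Fin.last k, a⟩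

/-- Labeled edges of the composable sequence `ℵ = (α₁,…,α_k)` in the ambient
disjoint union: the label `i : Fin k` records which PBR an edge comes from. -/
def EdgeMemG (Xs : Fin (k + 1) → Type)
    (A : ∀ i : Fin k, PBR (Xs i.castSucc) (Xs i.succ))
    (e : Fin k × Amb Xs × Amb Xs) : Prop :=
  ∃ p ∈ A e.1, embG Xs e.1 p.1 = e.2.1 ∧ embG Xs e.1 p.2 = e.2.2

/-- An `ℵ`-connected sequence: a nonempty list of labeled edges, no two
successive edges from the same PBR, endpoints matching up. -/
def IsConnSeqG (Xs : Fin (k + 1) → Type)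
    (A : ∀ i : Fin k, PBR (Xs i.castSucc) (Xs i.succ))
    (L : List (Fin k × Amb Xs × Amb Xs)) : Prop :=
  L ≠ [] ∧ (∀ e ∈ L, EdgeMemG Xs A e) ∧
    L.Chain' fun e f => e.1 ≠ f.1 ∧ e.2.2 = f.2.1

/-- `L` is an `ℵ`-connected sequence connecting `a` to `b`,
where `a, b ∈ X₁ ⊕ X_{k+1}`. -/
def ConnectsViaG (Xs : Fin (k + 1) → Type)
    (A : ∀ i : Fin k, PBR (Xs i.castSucc) (Xs i.succ))
    (L : List (Fin k × Amb Xs × Amb Xs)) (a b : Xs 0 ⊕ Xs (Fin.last k)) : Prop :=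
  IsConnSeqG Xs A L ∧ L.head?.map (fun e => e.2.1) = some (outerG Xs a) ∧
    L.getLast?.map (fun e => e.2.2) = some (outerG Xs b)

/-- An `ℵ`-frothy labeled edge: an edge of the corresponding PBR occurring in
no `ℵ`-connected sequence connecting two elements of `X₁ ⊕ X_{k+1}`. -/
def IsFrothyG (Xs : Fin (k + 1) → Type)
    (A : ∀ i : Fin k, PBR (Xs i.castSucc) (Xs i.succ))
    (e : Fin k × Amb Xs × Amb Xs) : Prop :=
  EdgeMemG Xs A e ∧ ∀ L a b, ConnectsViaG Xs A L a b → e ∉ L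

/-- An `ℵ`-frothy cycle. -/
def IsFrothyCycleG (Xs : Fin (k + 1) → Type)
    (A : ∀ i : Fin k, PBR (Xs i.castSucc) (Xs i.succ))
    (L : List (Fin k × Amb Xs × Amb Xs)) : Prop :=
  IsConnSeqG Xs A L ∧ 2 ≤ L.length ∧
    L.getLast?.map (fun e => e.2.2) = L.head?.map (fun e => e.2.1) ∧
    L.head?.map (fun e => e.1) ≠ L.getLast?.map (fun e => e.1) ∧
    ∀ e ∈ L, IsFrothyG Xs A e

/-- Equivalence of `ℵ`-frothy cycles: the smallest equivalence relation
containing elementary equivalence (sharing a common edge of the same PBR; the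
labels on edges record the PBR, and naive equivalence is subsumed since a
cycle shares all its edges with each of its cyclic permutations). -/
def CycleEquivG (Xs : Fin (k + 1) → Type)
    (A : ∀ i : Fin k, PBR (Xs i.castSucc) (Xs i.succ))
    (L L' : List (Fin k × Amb Xs × Amb Xs)) : Prop :=
  Relation.EqvGen
    (fun M M' => IsFrothyCycleG Xs A M ∧ IsFrothyCycleG Xs A M' ∧
      ∃ e, e ∈ M ∧ e ∈ M') L L'

/-- The successive-edge relation of connected sequences. -/
def Rel (Xs : Fin (k + 1) → Type) :
    (Fin k × Amb Xs × Amb Xs) → (Fin k × Amb Xs × Amb Xs) → Prop :=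
  fun e f => e.1 ≠ f.1 ∧ e.2.2 = f.2.1

/-- A frothy cycle is exactly a nonempty list of frothy edges of length ≥ 2
which is a cyclic chain for `Rel`. -/
lemma frothyCycle_iff (Xs : Fin (k + 1) → Type)
    (A : ∀ i : Fin k, PBR (Xs i.castSucc) (Xs i.succ))
    {L : List (Fin k × Amb Xs × Amb Xs)} (hL : L ≠ []) :
    IsFrothyCycleG Xs A L ↔
      2 ≤ L.length ∧ (∀ e ∈ L, IsFrothyG Xs A e) ∧
        Cycle.Chain (Rel Xs) ↑L := by
  obtain ⟨a, l, rfl⟩ := List.exists_cons_of_ne_nil hL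
  have hne : a :: l ≠ [] := List.cons_ne_nil _ _
  have hgl : (a :: l).getLast? = some ((a :: l).getLast hne) :=
    List.getLast?_eq_getLast hne
  have hcyc : Cycle.Chain (Rel Xs) ↑(a :: l) ↔
      (List.Chain' (Rel Xs) (a :: l) ∧ Rel Xs ((a :: l).getLast hne) a) := by
    rw [Cycle.chain_coe_cons]
    have : l ++ [a] = (a :: l).tail ++ [a] := rfl
    constructor
    · intro h
      have h' : List.Chain' (Rel Xs) ((a :: l) ++ [a]) := h
      rw [List.Chain', List.isChain_append] at h'
      refine ⟨h'.1, ?_⟩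
      have := h'.2.2
      rw [hgl] at this
      exact this _ rfl a rfl
    · rintro ⟨h1, h2⟩
      show List.Chain' (Rel Xs) ((a :: l) ++ [a])
      rw [List.Chain', List.isChain_append]
      refine ⟨h1, List.isChain_singleton _, ?_⟩
      intro x hx y hy
      rw [hgl, Option.mem_some_iff] at hx
      simp only [List.head?_cons, Option.mem_some_iff] at hy
      subst hx; subst hy; exact h2
  constructor
  · rintro ⟨⟨-, -, hchain⟩, hlen, hwrap, hlab, hfro⟩
    refine ⟨hlen, hfro, hcyc.mpr ⟨hchain, ?_, ?_⟩⟩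
    · rw [hgl] at hlab
      simp only [List.head?_cons, Option.map_some, ne_eq, Option.some.injEq] at hlab
      exact fun hEq => hlab hEq.symm
    · rw [hgl] at hwrap
      simpa using hwrap
  · rintro ⟨hlen, hfro, hcyc'⟩
    obtain ⟨hchain, hR⟩ := hcyc.mp hcyc'
    refine ⟨⟨hne, fun e he => (hfro e he).1, hchain⟩, hlen, ?_, ?_, hfro⟩
    · rw [hgl]; simpa using hR.2
    · rw [hgl]
      simp only [List.head?_cons, Option.map_some, ne_eq, Option.some.injEq]
      exact fun hEq => hR.1 hEq.symm

lemma coe_rotation {α : Type*} (l₁ l₂ : List α) (e : α) :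
    (↑(l₁ ++ e :: l₂) : Cycle α) = ↑(e :: (l₂ ++ l₁)) := by
  rw [Cycle.coe_eq_coe]
  refine ⟨l₁.length, ?_⟩
  rw [List.rotate_eq_drop_append_take (by simp)]
  rw [List.drop_left, List.take_left]
  simp

/-- Splicing two frothy cycles sharing a common edge. -/
lemma splice (Xs : Fin (k + 1) → Type)
    (A : ∀ i : Fin k, PBR (Xs i.castSucc) (Xs i.succ))
    {P Q : List (Fin k × Amb Xs × Amb Xs)}
    (hP : IsFrothyCycleG Xs A P) (hQ : IsFrothyCycleG Xs A Q)
    {e : Fin k × Amb Xs × Amb Xs} (heP : e ∈ P) (heQ : e ∈ Q) :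
    ∃ ω, IsFrothyCycleG Xs A ω ∧ (∀ f ∈ P, f ∈ ω) ∧ (∀ f ∈ Q, f ∈ ω) := by
  obtain ⟨p₁, p₂, rfl⟩ := List.append_of_mem heP
  obtain ⟨q₁, q₂, rfl⟩ := List.append_of_mem heQ
  have hPne : p₁ ++ e :: p₂ ≠ [] := by simp
  have hQne : q₁ ++ e :: q₂ ≠ [] := by simp
  obtain ⟨hPlen, hPfro, hPcyc⟩ := (frothyCycle_iff Xs A hPne).mp hP
  obtain ⟨hQlen, hQfro, hQcyc⟩ := (frothyCycle_iff Xs A hQne).mp hQ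
  rw [coe_rotation, Cycle.chain_coe_cons] at hPcyc hQcyc
  refine ⟨e :: ((p₂ ++ p₁) ++ e :: (q₂ ++ q₁)), ?_, ?_, ?_⟩
  · rw [frothyCycle_iff Xs A (List.cons_ne_nil _ _)]
    refine ⟨by simp; omega, ?_, ?_⟩
    · intro f hf
      simp only [List.mem_cons, List.mem_append] at hf
      rcases hf with rfl | (hf | hf) | rfl | hf | hf
      · exact hPfro f (by simp)
      · exact hPfro f (by simp [hf])
      · exact hPfro f (by simp [hf])
      · exact hPfro f (by simp)
      · exact hQfro f (by simp [hf])
      · exact hQfro f (by simp [hf])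
    · rw [Cycle.chain_coe_cons, List.append_assoc, List.cons_append,
        List.isChain_cons_split]
      exact ⟨hPcyc, hQcyc⟩
  · intro f hf
    simp only [List.mem_append, List.mem_cons] at hf
    simp only [List.mem_cons, List.mem_append]
    tauto
  · intro f hf
    simp only [List.mem_append, List.mem_cons] at hf
    simp only [List.mem_cons, List.mem_append]
    tauto

/-- If `ω'` and `ω''` are equivalent `ℵ`-frothy cycles, then there is an
`ℵ`-frothy cycle `ω` containing all the edges of both (with the same labels,
i.e. as edges of the same PBRs). -/
theorem equivalent_frothy_cycles_common_supercycle
    (k : ℕ) (Xs : Fin (k + 1) → Type) [∀ j, Fintype (Xs j)]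
    (A : ∀ i : Fin k, PBR (Xs i.castSucc) (Xs i.succ))
    (ω' ω'' : List (Fin k × Amb Xs × Amb Xs))
    (h' : IsFrothyCycleG Xs A ω') (h'' : IsFrothyCycleG Xs A ω'')
    (h : CycleEquivG Xs A ω' ω'') :
    ∃ ω, IsFrothyCycleG Xs A ω ∧ (∀ e ∈ ω', e ∈ ω) ∧ ∀ e ∈ ω'', e ∈ ω := by
  have key : ∀ L M : List (Fin k × Amb Xs × Amb Xs),
      Relation.EqvGen
        (fun M M' => IsFrothyCycleG Xs A M ∧ IsFrothyCycleG Xs A M' ∧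
          ∃ e, e ∈ M ∧ e ∈ M') L M →
      L = M ∨ (IsFrothyCycleG Xs A L ∧ IsFrothyCycleG Xs A M ∧
        ∃ ω, IsFrothyCycleG Xs A ω ∧ (∀ e ∈ L, e ∈ ω) ∧ (∀ e ∈ M, e ∈ ω)) := by
    intro L M hLM
    induction hLM with
    | rel L M hr =>
      obtain ⟨hL, hM, e, heL, heM⟩ := hr
      exact Or.inr ⟨hL, hM, splice Xs A hL hM heL heM⟩
    | refl L => exact Or.inl rfl
    | symm L M _ ih =>
      rcases ih with rfl | ⟨hL, hM, ω, hω, h1, h2⟩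
      · exact Or.inl rfl
      · exact Or.inr ⟨hM, hL, ω, hω, h2, h1⟩
    | trans L M N _ _ ih1 ih2 =>
      rcases ih1 with rfl | ⟨hL, hM, ω₁, hω₁, hL1, hM1⟩
      · exact ih2
      rcases ih2 with rfl | ⟨_, hN, ω₂, hω₂, hM2, hN2⟩
      · exact Or.inr ⟨hL, hM, ω₁, hω₁, hL1, hM1⟩
      obtain ⟨e, heM⟩ : ∃ e, e ∈ M := by
        rcases M with _ | ⟨a, t⟩
        · exact absurd hM.2.1 (by simp)
        · exact ⟨a, by simp⟩
      obtain ⟨ω, hω, h1, h2⟩ := splice Xs A hω₁ hω₂ (hM1 e heM) (hM2 e heM)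
      exact Or.inr ⟨hL, hN, ω, hω, fun f hf => h1 f (hL1 f hf),
        fun f hf => h2 f (hN2 f hf)⟩
  rcases key ω' ω'' h with rfl | ⟨-, -, ω, hω, h1, h2⟩
  · exact ⟨ω', h', fun e he => he, fun e he => he⟩
  · exact ⟨ω, hω, h1, h2⟩

end PBRPaper
end

section
/- For pairs (X₁,X₂) and (Y₁,Y₂) of finite sets with X₁ ⊆ X₂ and Y₁ ⊆ Y₂, call а PBR α on (X₂,Y₂) an admissible oriented Brauer diagram from (X₁,X₂) to (Y₁,Y₂) if every element of X₂ ⊕ Y₂ appears in exactly one edge of α and every edge (a,b) of α satisfies: a lies in X₁ inside the domain copy or in Y₂∖Y₁ inside the codomain copy, and b lies in Y₁ inside the codomain copy or in X₂∖X₁ inside the domain copy. Let ε̌_{(X₁,X₂)} be the PBR on (X₂,X₂) with edges (x^(d),x^(c)) for x ∈ X₁ and (x^(c),x^(d)) for x ∈ X₂∖X₁. Then: (i) if α is admissible from (X₁,X₂) to (Y₁,Y₂) and β is admissible from (Y₁,Y₂) to (Z₁,Z₂), then β∘α is admissible from (X₁,X₂) to (Z₁,Z₂); (ii) ε̌_{(X₁,X₂)}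 is admissible from (X₁,X₂) to itself, α∘ε̌_{(X₁,X₂)} = α = ε̌_{(Y₁,Y₂)}∘α, and 𝔣((ε̌_{(X₁,X₂)},α)) = 0 = 𝔣((α,ε̌_{(Y₁,Y₂)})). Hence admissible oriented Brauer diagrams paired with elements of ℕ₀, under the deformed composition (β,m)⋄(α,k) = (β∘α, m+k+𝔣((α,β))), form a category (the oriented Brauer category). -/
namespace PBRPaper

variable {X Y Z : Type}

variable {X₂ Y₂ : Type} in
/-- An admissible oriented Brauer diagram from `(X₁,X₂)` to `(Y₁,Y₂)`: every
element of `X₂ ⊕ Y₂` appears in exactly one edge, every edge starts in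
`X₁ ∪ (Y₂ ∖ Y₁)` and ends in `Y₁ ∪ (X₂ ∖ X₁)`. -/
def Admissible (X₁ : Set X₂) (Y₁ : Set Y₂) (α : PBR X₂ Y₂) : Prop :=
  (∀ s : X₂ ⊕ Y₂, ∃! p, p ∈ α ∧ (s = p.1 ∨ s = p.2)) ∧
  ∀ p ∈ α, Sum.elim (fun x => x ∈ X₁) (fun y => y ∉ Y₁) p.1 ∧
    Sum.elim (fun x => x ∉ X₁) (fun y => y ∈ Y₁) p.2

variable {X₂ : Type} in
/-- The oriented Brauer diagram `ε̌_{(X₁,X₂)}`, with edges `(x^(d),x^(c))` for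
`x ∈ X₁` and `(x^(c),x^(d))` for `x ∈ X₂ ∖ X₁`. -/
def epsCheck (X₁ : Set X₂) : PBR X₂ X₂ :=
  {p | ∃ x : X₂, (x ∈ X₁ ∧ p = (Sum.inl x, Sum.inr x)) ∨
        (x ∉ X₁ ∧ p = (Sum.inr x, Sum.inl x))}

section Aux

open Sum

variable {X₂ Y₂ Z₂ : Type} {X₁ : Set X₂} {Y₁ : Set Y₂} {Z₁ : Set Z₂}
  {α : PBR X₂ Y₂} {β : PBR Y₂ Z₂}

@[simp] lemma ι₁_inl (x : X₂) : (ι₁ (inl x) : X₂ ⊕ Y₂ ⊕ Z₂) = inl x := rfl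
@[simp] lemma ι₁_inr (y : Y₂) : (ι₁ (inr y) : X₂ ⊕ Y₂ ⊕ Z₂) = inr (inl y) := rfl
@[simp] lemma ι₂_inl (y : Y₂) : (ι₂ (inl y) : X₂ ⊕ Y₂ ⊕ Z₂) = inr (inl y) := rfl
@[simp] lemma ι₂_inr (z : Z₂) : (ι₂ (inr z) : X₂ ⊕ Y₂ ⊕ Z₂) = inr (inr z) := rfl
@[simp] lemma ι₀_inl (x : X₂) : (ι₀ (inl x) : X₂ ⊕ Y₂ ⊕ Z₂) = inl x := rfl
@[simp] lemma ι₀_inr (z : Z₂) : (ι₀ (inr z) : X₂ ⊕ Y₂ ⊕ Z₂) = inr (inr z) := rfl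

lemma ι₁_injective : Function.Injective (ι₁ : X₂ ⊕ Y₂ → X₂ ⊕ Y₂ ⊕ Z₂) := by
  rintro (x | y) (x' | y') h <;> simp_all

lemma ι₂_injective : Function.Injective (ι₂ : Y₂ ⊕ Z₂ → X₂ ⊕ Y₂ ⊕ Z₂) := by
  rintro (y | z) (y' | z') h <;> simp_all

lemma ι₀_injective : Function.Injective (ι₀ : X₂ ⊕ Z₂ → X₂ ⊕ Y₂ ⊕ Z₂) := by
  rintro (x | z) (x' | z') h <;> simp_all

lemma src_unique (hα : Admissible X₁ Y₁ α) {p q : (X₂ ⊕ Y₂) × (X₂ ⊕ Y₂)}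
    (hp : p ∈ α) (hq : q ∈ α) (h : p.1 = q.1) : p = q := by
  obtain ⟨r, -, hu⟩ := hα.1 p.1
  exact (hu p ⟨hp, Or.inl rfl⟩).trans (hu q ⟨hq, Or.inl h⟩).symm

lemma tgt_unique (hα : Admissible X₁ Y₁ α) {p q : (X₂ ⊕ Y₂) × (X₂ ⊕ Y₂)}
    (hp : p ∈ α) (hq : q ∈ α) (h : p.2 = q.2) : p = q := by
  obtain ⟨r, -, hu⟩ := hα.1 p.2
  exact (hu p ⟨hp, Or.inr rfl⟩).trans (hu q ⟨hq, Or.inr h⟩).symm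

lemma elim_not {s : X₂ ⊕ Y₂} (h1 : Sum.elim (· ∈ X₁) (· ∉ Y₁) s)
    (h2 : Sum.elim (· ∉ X₁) (· ∈ Y₁) s) : False := by
  cases s <;> simp_all

lemma exists_src (hα : Admissible X₁ Y₁ α) {s : X₂ ⊕ Y₂}
    (hs : Sum.elim (· ∈ X₁) (· ∉ Y₁) s) : ∃ p ∈ α, p.1 = s := by
  obtain ⟨p, ⟨hp, h⟩, -⟩ := hα.1 s
  rcases h with h | h
  · exact ⟨p, hp, h.symm⟩
  · exact absurd ((hα.2 p hp).2) (fun h2 => elim_not (h ▸ hs) h2)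

lemma exists_tgt (hα : Admissible X₁ Y₁ α) {s : X₂ ⊕ Y₂}
    (hs : Sum.elim (· ∉ X₁) (· ∈ Y₁) s) : ∃ p ∈ α, p.2 = s := by
  obtain ⟨p, ⟨hp, h⟩, -⟩ := hα.1 s
  rcases h with h | h
  · exact absurd ((hα.2 p hp).1) (fun h2 => elim_not h2 (h ▸ hs))
  · exact ⟨p, hp, h.symm⟩

lemma edgeMem_iff {e : Bool × (X₂ ⊕ Y₂ ⊕ Z₂) × (X₂ ⊕ Y₂ ⊕ Z₂)} :
    EdgeMem α β e ↔
      (e.1 = false ∧ ∃ p ∈ α, ι₁ p.1 = e.2.1 ∧ ι₁ p.2 = e.2.2) ∨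
      (e.1 = true ∧ ∃ p ∈ β, ι₂ p.1 = e.2.1 ∧ ι₂ p.2 = e.2.2) := by
  obtain ⟨b, u, v⟩ := e
  cases b <;> simp [EdgeMem]

lemma src_clash (hα : Admissible X₁ Y₁ α) (hβ : Admissible Y₁ Z₁ β)
    {p : (X₂ ⊕ Y₂) × (X₂ ⊕ Y₂)} {q : (Y₂ ⊕ Z₂) × (Y₂ ⊕ Z₂)} (hp : p ∈ α) (hq : q ∈ β)
    (h : (ι₁ p.1 : X₂ ⊕ Y₂ ⊕ Z₂) = ι₂ q.1) : False := by
  have h1 := (hα.2 p hp).1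
  have h2 := (hβ.2 q hq).1
  rcases hp1 : p.1 with x | y <;> rcases hq1 : q.1 with y' | z <;>
    rw [hp1] at h h1 <;> rw [hq1] at h h2 <;> simp_all

lemma tgt_clash (hα : Admissible X₁ Y₁ α) (hβ : Admissible Y₁ Z₁ β)
    {p : (X₂ ⊕ Y₂) × (X₂ ⊕ Y₂)} {q : (Y₂ ⊕ Z₂) × (Y₂ ⊕ Z₂)} (hp : p ∈ α) (hq : q ∈ β)
    (h : (ι₁ p.2 : X₂ ⊕ Y₂ ⊕ Z₂) = ι₂ q.2) : False := by
  have h1 := (hα.2 p hp).2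
  have h2 := (hβ.2 q hq).2
  rcases hp1 : p.2 with x | y <;> rcases hq1 : q.2 with y' | z <;>
    rw [hp1] at h h1 <;> rw [hq1] at h h2 <;> simp_all

/-- Two labeled edges with the same start are equal. -/
lemma det_src (hα : Admissible X₁ Y₁ α) (hβ : Admissible Y₁ Z₁ β)
    {e f : Bool × (X₂ ⊕ Y₂ ⊕ Z₂) × (X₂ ⊕ Y₂ ⊕ Z₂)}
    (he : EdgeMem α β e) (hf : EdgeMem α β f) (h : e.2.1 = f.2.1) : e = f := by
  obtain ⟨eb, e1, e2⟩ := e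
  obtain ⟨fb, f1, f2⟩ := f
  simp only at h
  subst h
  rcases edgeMem_iff.1 he with ⟨hb, p, hp, h1, h2⟩ | ⟨hb, p, hp, h1, h2⟩ <;>
    rcases edgeMem_iff.1 hf with ⟨hb', q, hq, h1', h2'⟩ | ⟨hb', q, hq, h1', h2'⟩ <;>
    simp only at hb hb' h1 h2 h1' h2' <;> subst hb <;> subst hb'
  · have hpq : p = q := src_unique hα hp hq (ι₁_injective (h1.trans h1'.symm))
    rw [← h2, ← h2', hpq]
  · exact absurd (h1.trans h1'.symm) (fun hh => src_clash hα hβ hp hq hh)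
  · exact absurd (h1'.trans h1.symm) (fun hh => src_clash hα hβ hq hp hh)
  · have hpq : p = q := src_unique hβ hp hq (ι₂_injective (h1.trans h1'.symm))
    rw [← h2, ← h2', hpq]

/-- Two labeled edges with the same end are equal. -/
lemma det_tgt (hα : Admissible X₁ Y₁ α) (hβ : Admissible Y₁ Z₁ β)
    {e f : Bool × (X₂ ⊕ Y₂ ⊕ Z₂) × (X₂ ⊕ Y₂ ⊕ Z₂)}
    (he : EdgeMem α β e) (hf : EdgeMem α β f) (h : e.2.2 = f.2.2) : e = f := by
  obtain ⟨eb, e1, e2⟩ := e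
  obtain ⟨fb, f1, f2⟩ := f
  simp only at h
  subst h
  rcases edgeMem_iff.1 he with ⟨hb, p, hp, h1, h2⟩ | ⟨hb, p, hp, h1, h2⟩ <;>
    rcases edgeMem_iff.1 hf with ⟨hb', q, hq, h1', h2'⟩ | ⟨hb', q, hq, h1', h2'⟩ <;>
    simp only at hb hb' h1 h2 h1' h2' <;> subst hb <;> subst hb'
  · have hpq : p = q := tgt_unique hα hp hq (ι₁_injective (h2.trans h2'.symm))
    rw [← h1, ← h1', hpq]
  · exact absurd (h2.trans h2'.symm) (fun hh => tgt_clash hα hβ hp hq hh)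
  · exact absurd (h2'.trans h2.symm) (fun hh => tgt_clash hα hβ hq hp hh)
  · have hpq : p = q := tgt_unique hβ hp hq (ι₂_injective (h2.trans h2'.symm))
    rw [← h1, ← h1', hpq]

/-- If one edge ends where another starts, their labels differ. -/
lemma mid_label (hα : Admissible X₁ Y₁ α) (hβ : Admissible Y₁ Z₁ β)
    {e f : Bool × (X₂ ⊕ Y₂ ⊕ Z₂) × (X₂ ⊕ Y₂ ⊕ Z₂)}
    (he : EdgeMem α β e) (hf : EdgeMem α β f) (h : e.2.2 = f.2.1) : e.1 ≠ f.1 := by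
  intro heq
  rcases edgeMem_iff.1 he with ⟨hb, p, hp, h1, h2⟩ | ⟨hb, p, hp, h1, h2⟩ <;>
    rcases edgeMem_iff.1 hf with ⟨hb', q, hq, h1', h2'⟩ | ⟨hb', q, hq, h1', h2'⟩ <;>
    rw [hb, hb'] at heq
  · have hpq : p.2 = q.1 := ι₁_injective (h2.trans (h.trans h1'.symm))
    have ha := (hα.2 p hp).2
    have hb2 := (hα.2 q hq).1
    rw [hpq] at ha
    exact elim_not hb2 ha
  · exact absurd heq (by simp)
  · exact absurd heq (by simp)
  · have hpq : p.2 = q.1 := ι₂_injective (h2.trans (h.trans h1'.symm))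
    have ha := (hβ.2 p hp).2
    have hb2 := (hβ.2 q hq).1
    rw [hpq] at ha
    exact elim_not hb2 ha

/-- The label of an edge ending at an outer point is determined. -/
lemma end_label {e : Bool × (X₂ ⊕ Y₂ ⊕ Z₂) × (X₂ ⊕ Y₂ ⊕ Z₂)}
    (he : EdgeMem α β e) {b : X₂ ⊕ Z₂} (h : e.2.2 = ι₀ b) :
    e.1 = Sum.elim (fun _ => false) (fun _ => true) b := by
  rcases edgeMem_iff.1 he with ⟨hb, p, hp, h1, h2⟩ | ⟨hb, p, hp, h1, h2⟩ <;>
    rw [hb] <;> rw [h] at h2 <;>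
    rcases hp2 : p.2 with u | v <;> rw [hp2] at h2 <;> rcases b with x | z <;> simp_all

lemma start_label {e : Bool × (X₂ ⊕ Y₂ ⊕ Z₂) × (X₂ ⊕ Y₂ ⊕ Z₂)}
    (he : EdgeMem α β e) {b : X₂ ⊕ Z₂} (h : e.2.1 = ι₀ b) :
    e.1 = Sum.elim (fun _ => false) (fun _ => true) b := by
  rcases edgeMem_iff.1 he with ⟨hb, p, hp, h1, h2⟩ | ⟨hb, p, hp, h1, h2⟩ <;>
    rw [hb] <;> rw [h] at h1 <;>
    rcases hp1 : p.1 with u | v <;> rw [hp1] at h1 <;> rcases b with x | z <;> simp_all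

/-- No connected sequence can pass through an outer point. -/
lemma no_through {e f : Bool × (X₂ ⊕ Y₂ ⊕ Z₂) × (X₂ ⊕ Y₂ ⊕ Z₂)}
    (he : EdgeMem α β e) (hf : EdgeMem α β f) {b : X₂ ⊕ Z₂}
    (h2 : e.2.2 = ι₀ b) (h1 : f.2.1 = ι₀ b) : e.1 = f.1 :=
  (end_label he h2).trans (start_label hf h1).symm

/-- Where a sequence starts, membership condition. -/
lemma start_mem (hα : Admissible X₁ Y₁ α) (hβ : Admissible Y₁ Z₁ β)
    {e : Bool × (X₂ ⊕ Y₂ ⊕ Z₂) × (X₂ ⊕ Y₂ ⊕ Z₂)}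
    (he : EdgeMem α β e) {a : X₂ ⊕ Z₂} (h : e.2.1 = ι₀ a) :
    Sum.elim (· ∈ X₁) (· ∉ Z₁) a := by
  rcases edgeMem_iff.1 he with ⟨hb, p, hp, h1, h2⟩ | ⟨hb, p, hp, h1, h2⟩ <;>
    rw [h] at h1 <;> [have hd := (hα.2 p hp).1; have hd := (hβ.2 p hp).1] <;>
    rcases hp1 : p.1 with u | v <;> rw [hp1] at h1 hd <;> rcases a with x | z <;> simp_all

lemma end_mem (hα : Admissible X₁ Y₁ α) (hβ : Admissible Y₁ Z₁ β)
    {e : Bool × (X₂ ⊕ Y₂ ⊕ Z₂) × (X₂ ⊕ Y₂ ⊕ Z₂)}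
    (he : EdgeMem α β e) {b : X₂ ⊕ Z₂} (h : e.2.2 = ι₀ b) :
    Sum.elim (· ∉ X₁) (· ∈ Z₁) b := by
  rcases edgeMem_iff.1 he with ⟨hb, p, hp, h1, h2⟩ | ⟨hb, p, hp, h1, h2⟩ <;>
    rw [h] at h2 <;> [have hd := (hα.2 p hp).2; have hd := (hβ.2 p hp).2] <;>
    rcases hp2 : p.2 with u | v <;> rw [hp2] at h2 hd <;> rcases b with x | z <;> simp_all

/-- From a source-type or middle vertex there is an outgoing edge. -/
lemma exists_out_of_src (hα : Admissible X₁ Y₁ α) (hβ : Admissible Y₁ Z₁ β)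
    {a : X₂ ⊕ Z₂} (ha : Sum.elim (· ∈ X₁) (· ∉ Z₁) a) :
    ∃ e, EdgeMem α β e ∧ e.2.1 = (ι₀ a : X₂ ⊕ Y₂ ⊕ Z₂) := by
  rcases a with x | z
  · obtain ⟨p, hp, h1⟩ := exists_src hα (s := inl x) (by simpa using ha)
    exact ⟨(false, (ι₁ p.1, ι₁ p.2)), edgeMem_iff.2 (Or.inl ⟨rfl, p, hp, rfl, rfl⟩),
      by rw [h1]; simp⟩
  · obtain ⟨p, hp, h1⟩ := exists_src hβ (s := inr z) (by simpa using ha)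
    exact ⟨(true, (ι₂ p.1, ι₂ p.2)), edgeMem_iff.2 (Or.inr ⟨rfl, p, hp, rfl, rfl⟩),
      by rw [h1]; simp⟩

lemma exists_out_mid (hα : Admissible X₁ Y₁ α) (hβ : Admissible Y₁ Z₁ β) (y : Y₂) :
    ∃ e, EdgeMem α β e ∧ e.2.1 = (inr (inl y) : X₂ ⊕ Y₂ ⊕ Z₂) := by
  by_cases hy : y ∈ Y₁
  · obtain ⟨p, hp, h1⟩ := exists_src hβ (s := inl y) (by simpa using hy)
    exact ⟨(true, (ι₂ p.1, ι₂ p.2)), edgeMem_iff.2 (Or.inr ⟨rfl, p, hp, rfl, rfl⟩),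
      by rw [h1]; simp⟩
  · obtain ⟨p, hp, h1⟩ := exists_src hα (s := inr y) (by simpa using hy)
    exact ⟨(false, (ι₁ p.1, ι₁ p.2)), edgeMem_iff.2 (Or.inl ⟨rfl, p, hp, rfl, rfl⟩),
      by rw [h1]; simp⟩

lemma exists_in_of_tgt (hα : Admissible X₁ Y₁ α) (hβ : Admissible Y₁ Z₁ β)
    {b : X₂ ⊕ Z₂} (hb : Sum.elim (· ∉ X₁) (· ∈ Z₁) b) :
    ∃ e, EdgeMem α β e ∧ e.2.2 = (ι₀ b : X₂ ⊕ Y₂ ⊕ Z₂) := by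
  rcases b with x | z
  · obtain ⟨p, hp, h1⟩ := exists_tgt hα (s := inl x) (by simpa using hb)
    exact ⟨(false, (ι₁ p.1, ι₁ p.2)), edgeMem_iff.2 (Or.inl ⟨rfl, p, hp, rfl, rfl⟩),
      by rw [h1]; simp⟩
  · obtain ⟨p, hp, h1⟩ := exists_tgt hβ (s := inr z) (by simpa using hb)
    exact ⟨(true, (ι₂ p.1, ι₂ p.2)), edgeMem_iff.2 (Or.inr ⟨rfl, p, hp, rfl, rfl⟩),
      by rw [h1]; simp⟩

lemma exists_in_mid (hα : Admissible X₁ Y₁ α) (hβ : Admissible Y₁ Z₁ β) (y : Y₂) :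
    ∃ e, EdgeMem α β e ∧ e.2.2 = (inr (inl y) : X₂ ⊕ Y₂ ⊕ Z₂) := by
  by_cases hy : y ∈ Y₁
  · obtain ⟨p, hp, h1⟩ := exists_tgt hα (s := inr y) (by simpa using hy)
    exact ⟨(false, (ι₁ p.1, ι₁ p.2)), edgeMem_iff.2 (Or.inl ⟨rfl, p, hp, rfl, rfl⟩),
      by rw [h1]; simp⟩
  · obtain ⟨p, hp, h1⟩ := exists_tgt hβ (s := inl y) (by simpa using hy)
    exact ⟨(true, (ι₂ p.1, ι₂ p.2)), edgeMem_iff.2 (Or.inr ⟨rfl, p, hp, rfl, rfl⟩),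
      by rw [h1]; simp⟩

/-- A vertex with no outgoing edge is an outer point. -/
lemma final_of_no_out (hα : Admissible X₁ Y₁ α) (hβ : Admissible Y₁ Z₁ β)
    {w : X₂ ⊕ Y₂ ⊕ Z₂} (h : ∀ e, EdgeMem α β e → e.2.1 ≠ w) :
    ∃ b : X₂ ⊕ Z₂, w = ι₀ b := by
  rcases w with x | y | z
  · exact ⟨inl x, rfl⟩
  · obtain ⟨e, he, he1⟩ := exists_out_mid hα hβ y
    exact absurd he1 (h e he)
  · exact ⟨inr z, rfl⟩

lemma initial_of_no_in (hα : Admissible X₁ Y₁ α) (hβ : Admissible Y₁ Z₁ β)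
    {w : X₂ ⊕ Y₂ ⊕ Z₂} (h : ∀ e, EdgeMem α β e → e.2.2 ≠ w) :
    ∃ b : X₂ ⊕ Z₂, w = ι₀ b := by
  rcases w with x | y | z
  · exact ⟨inl x, rfl⟩
  · obtain ⟨e, he, he1⟩ := exists_in_mid hα hβ y
    exact absurd he1 (h e he)
  · exact ⟨inr z, rfl⟩

/-- Abstract walk lemma: following a co-injective relation from a vertex with no
predecessors in a finite type terminates at a dead end. -/
lemma abstract_walk {W : Type} [Fintype W] [DecidableEq W] (E : W → W → Prop)
    (hinj : ∀ ⦃w w' v⦄, E w v → E w' v → w = w') :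
    ∀ (n : ℕ) (V : Finset W) (s : W), (Finset.univ \ V).card ≤ n → s ∉ V →
      (∀ v ∈ insert s V, ∀ w, E w v → w ∈ V) →
      ∃ l : List W, List.Chain E s l ∧
        ∀ t, ¬ E ((s :: l).getLast (List.cons_ne_nil _ _)) t := by
  classical
  intro n
  induction n with
  | zero =>
    intro V s hcard hs hinv
    exfalso
    have hmem : s ∈ Finset.univ \ V := by simp [hs]
    have := Finset.card_pos.2 ⟨s, hmem⟩
    omega
  | succ n ih =>
    intro V s hcard hs hinv
    by_cases h : ∃ t, E s t
    · obtain ⟨t, ht⟩ := h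
      have htV : t ∉ insert s V := fun hmem => hs (hinv t hmem s ht)
      have hcard' : (Finset.univ \ insert s V).card ≤ n := by
        have hmem : s ∈ Finset.univ \ V := by simp [hs]
        have h1 : Finset.univ \ insert s V ⊆ (Finset.univ \ V).erase s := by
          intro w hw
          simp only [Finset.mem_sdiff, Finset.mem_insert, Finset.mem_erase,
            Finset.mem_univ, true_and] at hw ⊢
          tauto
        have h2 := Finset.card_le_card h1
        have h3 := Finset.card_erase_of_mem hmem
        omega
      have hinv' : ∀ v ∈ insert t (insert s V), ∀ w, E w v → w ∈ insert s V := by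
        intro v hv w hw
        rcases Finset.mem_insert.1 hv with rfl | hv'
        · have : w = s := hinj hw ht
          simp [this]
        · exact Finset.mem_insert_of_mem (hinv v hv' w hw)
      obtain ⟨l, hl, hlast⟩ := ih (insert s V) t hcard' htV hinv'
      refine ⟨t :: l, List.Chain.cons ht hl, ?_⟩
      intro u
      have hgl : (s :: t :: l).getLast (List.cons_ne_nil _ _) =
          (t :: l).getLast (List.cons_ne_nil _ _) := List.getLast_cons _
      rw [hgl]
      exact hlast u
    · exact ⟨[], List.Chain.nil, fun t ht => h ⟨t, ht⟩⟩

/-- The edge-following relation in the ambient type. -/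
def ERel (α : PBR X₂ Y₂) (β : PBR Y₂ Z₂) (w v : X₂ ⊕ Y₂ ⊕ Z₂) : Prop :=
  ∃ e, EdgeMem α β e ∧ e.2 = (w, v)

/-- Convert a vertex chain into a labeled connected sequence. -/
lemma chain_to_seq (hα : Admissible X₁ Y₁ α) (hβ : Admissible Y₁ Z₁ β) :
    ∀ (l : List (X₂ ⊕ Y₂ ⊕ Z₂)) (s t : X₂ ⊕ Y₂ ⊕ Z₂),
      List.Chain (ERel α β) s (t :: l) →
      ∃ L, L ≠ [] ∧ (∀ e ∈ L, EdgeMem α β e) ∧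
        (L.Chain' fun e f => e.1 ≠ f.1 ∧ e.2.2 = f.2.1) ∧
        L.head?.map (fun e => e.2.1) = some s ∧
        L.getLast?.map (fun e => e.2.2) =
          some ((t :: l).getLast (List.cons_ne_nil _ _)) := by
  intro l
  induction l with
  | nil =>
    intro s t h
    rw [List.Chain, List.chain_cons] at h
    obtain ⟨⟨e, he, he2⟩, -⟩ := h
    refine ⟨[e], by simp, by simp [he], by simp [List.Chain'], ?_, ?_⟩ <;> simp [he2]
  | cons u l ih =>
    intro s t h
    rw [List.Chain, List.chain_cons] at h
    obtain ⟨⟨e, he, he2⟩, h'⟩ := h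
    obtain ⟨L, hne, hval, hch, hhead, hlast⟩ := ih t u h'
    cases L with
    | nil => exact absurd rfl hne
    | cons f T =>
      have hf1 : f.2.1 = t := by simpa using hhead
      have hfmem : EdgeMem α β f := hval f (by simp)
      have he22 : e.2.2 = t := by rw [he2]
      refine ⟨e :: f :: T, by simp, ?_, ?_, ?_, ?_⟩
      · intro g hg
        rcases List.mem_cons.1 hg with rfl | hg'
        · exact he
        · exact hval g hg'
      · exact List.isChain_cons_cons.2
          ⟨⟨mid_label hα hβ he hfmem (he22.trans hf1.symm), he22.trans hf1.symm⟩, hch⟩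
      · simp [he2]
      · rw [List.getLast?_cons_cons, hlast, List.getLast_cons (List.cons_ne_nil _ _)]

/-- Convert a reversed vertex chain into a labeled connected sequence. -/
lemma chain_to_seq_rev (hα : Admissible X₁ Y₁ α) (hβ : Admissible Y₁ Z₁ β) :
    ∀ (l : List (X₂ ⊕ Y₂ ⊕ Z₂)) (s t : X₂ ⊕ Y₂ ⊕ Z₂),
      List.Chain (fun w v => ERel α β v w) s (t :: l) →
      ∃ L, L ≠ [] ∧ (∀ e ∈ L, EdgeMem α β e) ∧
        (L.Chain' fun e f => e.1 ≠ f.1 ∧ e.2.2 = f.2.1) ∧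
        L.head?.map (fun e => e.2.1) =
          some ((t :: l).getLast (List.cons_ne_nil _ _)) ∧
        L.getLast?.map (fun e => e.2.2) = some s := by
  intro l
  induction l with
  | nil =>
    intro s t h
    rw [List.Chain, List.chain_cons] at h
    obtain ⟨⟨e, he, he2⟩, -⟩ := h
    refine ⟨[e], by simp, by simp [he], by simp [List.Chain'], ?_, ?_⟩ <;> simp [he2]
  | cons u l ih =>
    intro s t h
    rw [List.Chain, List.chain_cons] at h
    obtain ⟨⟨e, he, he2⟩, h'⟩ := h
    obtain ⟨L, hne, hval, hch, hhead, hlast⟩ := ih t u h'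
    have he1 : e.2.1 = t := by rw [he2]
    have he22 : e.2.2 = s := by rw [he2]
    cases L with
    | nil => exact absurd rfl hne
    | cons f T =>
      obtain ⟨g, hgl⟩ : ∃ g, (f :: T).getLast? = some g :=
        ⟨(f :: T).getLast (List.cons_ne_nil _ _), List.getLast?_eq_getLast _⟩
      have hg2 : g.2.2 = t := by
        rw [hgl] at hlast
        exact Option.some.inj (by simpa using hlast)
      have hgmem : g ∈ f :: T := by
        have := List.getLast_mem (List.cons_ne_nil f T)
        rwa [← Option.some.inj (((List.getLast?_eq_getLast (l := f :: T) (List.cons_ne_nil _ _))).symm.trans hgl)]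
      refine ⟨(f :: T) ++ [e], by simp, ?_, ?_, ?_, ?_⟩
      · intro x hx
        rcases List.mem_append.1 hx with hx' | hx'
        · exact hval x hx'
        · rw [List.mem_singleton.1 hx']
          exact he
      · rw [List.Chain', List.isChain_append]
        refine ⟨hch, by simp, ?_⟩
        intro x hx y hy
        rw [hgl] at hx
        simp only [Option.mem_def, Option.some.injEq] at hx
        simp only [List.head?_cons, Option.mem_def, Option.some.injEq] at hy
        subst hx; subst hy
        exact ⟨mid_label hα hβ (hval g hgmem) he (hg2.trans he1.symm),
          hg2.trans he1.symm⟩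
      · have h1 : ((f :: T) ++ [e]).head? = some f := by simp
        rw [h1, List.getLast_cons (List.cons_ne_nil _ _)]
        simpa using hhead
      · rw [List.getLast?_concat]
        simp [he22]

/-- Existence of a connected sequence starting at a source-type element. -/
lemma exists_seq_from [Fintype X₂] [Fintype Y₂] [Fintype Z₂]
    (hα : Admissible X₁ Y₁ α) (hβ : Admissible Y₁ Z₁ β) {a : X₂ ⊕ Z₂}
    (ha : Sum.elim (· ∈ X₁) (· ∉ Z₁) a) : ∃ b L, ConnectsVia α β L a b := by
  classical
  have hinj : ∀ ⦃w w' v⦄, ERel α β w v → ERel α β w' v → w = w' := by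
    rintro w w' v ⟨e, he, he2⟩ ⟨f, hf, hf2⟩
    have hef := det_tgt hα hβ he hf (by rw [he2, hf2])
    rw [hef, hf2] at he2
    exact ((Prod.mk.injEq _ _ _ _ ▸ he2).1).symm
  have hinv : ∀ v ∈ insert (ι₀ a) (∅ : Finset (X₂ ⊕ Y₂ ⊕ Z₂)), ∀ w,
      ERel α β w v → w ∈ (∅ : Finset (X₂ ⊕ Y₂ ⊕ Z₂)) := by
    intro v hv w hw
    exfalso
    simp only [Finset.mem_insert, Finset.notMem_empty, or_false] at hv
    subst hv
    obtain ⟨e, he, he2⟩ := hw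
    have hend : e.2.2 = ι₀ a := by rw [he2]
    exact elim_not ha (end_mem hα hβ he hend)
  obtain ⟨l, hl, hlast⟩ := abstract_walk (ERel α β) hinj
    (Finset.univ \ (∅ : Finset (X₂ ⊕ Y₂ ⊕ Z₂))).card ∅ (ι₀ a) le_rfl (by simp) hinv
  cases l with
  | nil =>
    exfalso
    obtain ⟨e, he, he1⟩ := exists_out_of_src hα hβ ha
    exact hlast e.2.2 ⟨e, he, by rw [← he1]; simp⟩
  | cons t l' =>
    obtain ⟨L, hne, hval, hch, hhead, hlastL⟩ := chain_to_seq hα hβ l' (ι₀ a) t hl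
    have hnoout : ∀ e, EdgeMem α β e →
        e.2.1 ≠ (t :: l').getLast (List.cons_ne_nil _ _) := by
      intro e he h1
      refine hlast e.2.2 ⟨e, he, ?_⟩
      rw [List.getLast_cons (List.cons_ne_nil _ _), ← h1]
    obtain ⟨b, hb⟩ := final_of_no_out hα hβ hnoout
    exact ⟨b, L, ⟨⟨hne, hval, hch⟩, hhead, by rw [hlastL, hb]⟩⟩

/-- Existence of a connected sequence ending at a target-type element. -/
lemma exists_seq_to [Fintype X₂] [Fintype Y₂] [Fintype Z₂]
    (hα : Admissible X₁ Y₁ α) (hβ : Admissible Y₁ Z₁ β) {b : X₂ ⊕ Z₂}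
    (hb : Sum.elim (· ∉ X₁) (· ∈ Z₁) b) : ∃ a L, ConnectsVia α β L a b := by
  classical
  have hinj' : ∀ ⦃w w' v⦄, (fun w v => ERel α β v w) w v →
      (fun w v => ERel α β v w) w' v → w = w' := by
    rintro w w' v ⟨e, he, he2⟩ ⟨f, hf, hf2⟩
    have hef := det_src hα hβ he hf (by rw [he2, hf2])
    rw [hef, hf2] at he2
    exact ((Prod.mk.injEq _ _ _ _ ▸ he2).2).symm
  have hinv : ∀ v ∈ insert (ι₀ b) (∅ : Finset (X₂ ⊕ Y₂ ⊕ Z₂)), ∀ w,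
      (fun w v => ERel α β v w) w v → w ∈ (∅ : Finset (X₂ ⊕ Y₂ ⊕ Z₂)) := by
    intro v hv w hw
    exfalso
    simp only [Finset.mem_insert, Finset.notMem_empty, or_false] at hv
    subst hv
    obtain ⟨e, he, he2⟩ := hw
    have hstart : e.2.1 = ι₀ b := by rw [he2]
    exact elim_not (start_mem hα hβ he hstart) hb
  obtain ⟨l, hl, hlast⟩ := abstract_walk (fun w v => ERel α β v w) hinj'
    (Finset.univ \ (∅ : Finset (X₂ ⊕ Y₂ ⊕ Z₂))).card ∅ (ι₀ b) le_rfl (by simp) hinv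
  cases l with
  | nil =>
    exfalso
    obtain ⟨e, he, he1⟩ := exists_in_of_tgt hα hβ hb
    exact hlast e.2.1 ⟨e, he, by rw [← he1]; simp⟩
  | cons t l' =>
    obtain ⟨L, hne, hval, hch, hhead, hlastL⟩ := chain_to_seq_rev hα hβ l' (ι₀ b) t hl
    have hnoin : ∀ e, EdgeMem α β e →
        e.2.2 ≠ (t :: l').getLast (List.cons_ne_nil _ _) := by
      intro e he h1
      refine hlast e.2.1 ⟨e, he, ?_⟩
      rw [List.getLast_cons (List.cons_ne_nil _ _), ← h1]
    obtain ⟨a, hav⟩ := initial_of_no_in hα hβ hnoin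
    exact ⟨a, L, ⟨⟨hne, hval, hch⟩, by rw [hhead, hav], hlastL⟩⟩

/-- Generic determinism for chains with deterministic first element. -/
lemma det_generic {Ed W : Type} (P : Ed → Prop) (r : Ed → Ed → Prop)
    (p q : Ed → W) (Fi : W → Prop)
    (hdet : ∀ e f, P e → P f → p e = p f → e = f)
    (hr : ∀ e f, r e f → p f = q e)
    (hstop : ∀ e f, P e → P f → Fi (q e) → r e f → False) :
    ∀ L L' : List Ed, L ≠ [] → L' ≠ [] → (∀ e ∈ L, P e) → (∀ e ∈ L', P e) →
      L.Chain' r → L'.Chain' r →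
      L.head?.map p = L'.head?.map p →
      (∀ x, L.getLast?.map q = some x → Fi x) →
      (∀ x, L'.getLast?.map q = some x → Fi x) → L = L' := by
  intro L
  induction L with
  | nil => simp
  | cons e T ih =>
    intro L' _ hne' hP hP' hch hch' hhead hfin hfin'
    cases L' with
    | nil => exact absurd rfl hne'
    | cons f T' =>
      have hef : e = f :=
        hdet _ _ (hP e (by simp)) (hP' f (by simp))
          (Option.some.inj (by simpa using hhead))
      subst hef
      cases T with
      | nil =>
        cases T' with
        | nil => rfl
        | cons g T'' =>
          exfalso
          have hFin : Fi (q e) := hfin _ (by simp)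
          exact hstop e g (hP e (by simp)) (hP' g (by simp)) hFin
            (List.isChain_cons_cons.1 hch').1
      | cons g T'' =>
        cases T' with
        | nil =>
          exfalso
          have hFin : Fi (q e) := hfin' _ (by simp)
          exact hstop e g (hP e (by simp)) (hP g (by simp)) hFin
            (List.isChain_cons_cons.1 hch).1
        | cons g' T₃ =>
          have hg : p g = p g' := by
            rw [hr e g (List.isChain_cons_cons.1 hch).1, hr e g' (List.isChain_cons_cons.1 hch').1]
          have htail : g :: T'' = g' :: T₃ := by
            refine ih (g' :: T₃) (by simp) (by simp)
              (fun x hx => hP x (List.mem_cons_of_mem _ hx))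
              (fun x hx => hP' x (List.mem_cons_of_mem _ hx))
              (List.isChain_cons_cons.1 hch).2 (List.isChain_cons_cons.1 hch').2
              (by simpa using hg) ?_ ?_
            · intro x hx
              refine hfin x ?_
              rwa [List.getLast?_cons_cons]
            · intro x hx
              refine hfin' x ?_
              rwa [List.getLast?_cons_cons]
          rw [htail]

/-- Connected sequences starting at the same point coincide. -/
lemma connects_det (hα : Admissible X₁ Y₁ α) (hβ : Admissible Y₁ Z₁ β)
    {L L' : List (Bool × (X₂ ⊕ Y₂ ⊕ Z₂) × (X₂ ⊕ Y₂ ⊕ Z₂))} {a b b' : X₂ ⊕ Z₂}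
    (h : ConnectsVia α β L a b) (h' : ConnectsVia α β L' a b') :
    L = L' ∧ b = b' := by
  obtain ⟨⟨hne, hval, hch⟩, hhead, hlast⟩ := h
  obtain ⟨⟨hne', hval', hch'⟩, hhead', hlast'⟩ := h'
  have hLL : L = L' := by
    refine det_generic (EdgeMem α β) _ (fun e => e.2.1) (fun e => e.2.2)
      (fun w => ∃ c : X₂ ⊕ Z₂, w = ι₀ c)
      (fun e f he hf hh => det_src hα hβ he hf hh)
      (fun e f hrel => hrel.2.symm)
      ?_ L L' hne hne' hval hval' hch hch' (by rw [hhead, hhead']) ?_ ?_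
    · rintro e f he hf ⟨c, hc⟩ hrel
      have := no_through he hf hc (hrel.2 ▸ hc)
      exact hrel.1 this
    · intro x hx
      rw [hlast] at hx
      exact ⟨b, (Option.some.inj hx).symm⟩
    · intro x hx
      rw [hlast'] at hx
      exact ⟨b', (Option.some.inj hx).symm⟩
  refine ⟨hLL, ι₀_injective (Y₂ := Y₂) ?_⟩
  rw [hLL] at hlast
  rw [hlast] at hlast'
  exact Option.some.inj hlast'

/-- Connected sequences ending at the same point coincide. -/
lemma connects_det_rev (hα : Admissible X₁ Y₁ α) (hβ : Admissible Y₁ Z₁ β)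
    {L L' : List (Bool × (X₂ ⊕ Y₂ ⊕ Z₂) × (X₂ ⊕ Y₂ ⊕ Z₂))} {a a' b : X₂ ⊕ Z₂}
    (h : ConnectsVia α β L a b) (h' : ConnectsVia α β L' a' b) :
    L = L' ∧ a = a' := by
  obtain ⟨⟨hne, hval, hch⟩, hhead, hlast⟩ := h
  obtain ⟨⟨hne', hval', hch'⟩, hhead', hlast'⟩ := h'
  have hLL : L.reverse = L'.reverse := by
    refine det_generic (EdgeMem α β)
      (fun e f => f.1 ≠ e.1 ∧ f.2.2 = e.2.1)
      (fun e => e.2.2) (fun e => e.2.1)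
      (fun w => ∃ c : X₂ ⊕ Z₂, w = ι₀ c)
      (fun e f he hf hh => det_tgt hα hβ he hf hh)
      (fun e f hrel => hrel.2)
      ?_ L.reverse L'.reverse (by simpa using hne) (by simpa using hne')
      (fun x hx => hval x (List.mem_reverse.1 hx))
      (fun x hx => hval' x (List.mem_reverse.1 hx))
      (by rw [List.Chain', List.isChain_reverse]; exact hch)
      (by rw [List.Chain', List.isChain_reverse]; exact hch') ?_ ?_ ?_
    · rintro e f he hf ⟨c, hc⟩ hrel
      have := no_through hf he (hrel.2 ▸ hc) hc
      exact hrel.1 this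
    · rw [List.head?_reverse, List.head?_reverse, hlast, hlast']
    · intro x hx
      rw [List.getLast?_reverse, hhead] at hx
      exact ⟨a, (Option.some.inj hx).symm⟩
    · intro x hx
      rw [List.getLast?_reverse, hhead'] at hx
      exact ⟨a', (Option.some.inj hx).symm⟩
  have hLL' : L = L' := by
    have := congrArg List.reverse hLL
    simpa using this
  refine ⟨hLL', ι₀_injective (Y₂ := Y₂) ?_⟩
  rw [hLL'] at hhead
  rw [hhead] at hhead'
  exact Option.some.inj hhead'

/-- The endpoints of a connected sequence are of source / target type. -/
lemma connects_mem (hα : Admissible X₁ Y₁ α) (hβ : Admissible Y₁ Z₁ β)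
    {L : List (Bool × (X₂ ⊕ Y₂ ⊕ Z₂) × (X₂ ⊕ Y₂ ⊕ Z₂))} {a b : X₂ ⊕ Z₂}
    (h : ConnectsVia α β L a b) :
    Sum.elim (· ∈ X₁) (· ∉ Z₁) a ∧ Sum.elim (· ∉ X₁) (· ∈ Z₁) b := by
  obtain ⟨⟨hne, hval, -⟩, hhead, hlast⟩ := h
  cases L with
  | nil => exact absurd rfl hne
  | cons e T =>
    constructor
    · exact start_mem hα hβ (hval e (by simp)) (Option.some.inj (by simpa using hhead))
    · obtain ⟨g, hgl⟩ : ∃ g, (e :: T).getLast? = some g :=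
        ⟨(e :: T).getLast (List.cons_ne_nil _ _), List.getLast?_eq_getLast _⟩
      have hgmem : g ∈ e :: T := by
        have := List.getLast_mem (List.cons_ne_nil e T)
        rwa [← Option.some.inj (((List.getLast?_eq_getLast (l := e :: T)
          (List.cons_ne_nil _ _))).symm.trans hgl)]
      refine end_mem hα hβ (hval g hgmem) ?_
      rw [hgl] at hlast
      exact Option.some.inj (by simpa using hlast)

lemma src_or_tgt (s : X₂ ⊕ Z₂) :
    Sum.elim (· ∈ X₁) (· ∉ Z₁) s ∨ Sum.elim (· ∉ X₁) (· ∈ Z₁) s := by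
  classical
  rcases s with x | z
  · by_cases h : x ∈ X₁
    · exact Or.inl (by simpa using h)
    · exact Or.inr (by simpa using h)
  · by_cases h : z ∈ Z₁
    · exact Or.inr (by simpa using h)
    · exact Or.inl (by simpa using h)

/-- Part (i): composition of admissible diagrams is admissible. -/
theorem comp_admissible [Fintype X₂] [Fintype Y₂] [Fintype Z₂]
    (hα : Admissible X₁ Y₁ α) (hβ : Admissible Y₁ Z₁ β) :
    Admissible X₁ Z₁ (comp β α) := by
  constructor
  · intro s
    rcases src_or_tgt (Z₁ := Z₁) s with hs | hs
    · obtain ⟨b, L, hL⟩ := exists_seq_from hα hβ hs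
      refine ⟨(s, b), ⟨⟨L, hL⟩, Or.inl rfl⟩, ?_⟩
      rintro q ⟨⟨L', hL'⟩, hq | hq⟩
      · obtain ⟨-, h2⟩ := connects_det hα hβ hL' (by rw [← hq] at hL' ⊢; exact hL)
        exact Prod.ext hq.symm h2
      · exfalso
        have := (connects_mem hα hβ hL').2
        rw [← hq] at this
        exact elim_not hs this
    · obtain ⟨a, L, hL⟩ := exists_seq_to hα hβ hs
      refine ⟨(a, s), ⟨⟨L, hL⟩, Or.inr rfl⟩, ?_⟩
      rintro q ⟨⟨L', hL'⟩, hq | hq⟩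
      · exfalso
        have := (connects_mem hα hβ hL').1
        rw [← hq] at this
        exact elim_not this hs
      · obtain ⟨-, h2⟩ := connects_det_rev hα hβ hL' (by rw [← hq] at hL' ⊢; exact hL)
        exact Prod.ext h2 hq.symm
  · rintro p ⟨L, hL⟩
    exact connects_mem hα hβ hL

/-- Part (ii): the diagrams ε̌ are admissible. -/
theorem epsCheck_admissible {X₂ : Type} (X₁ : Set X₂) :
    Admissible X₁ X₁ (epsCheck X₁) := by
  classical
  constructor
  · intro s
    rcases s with x | x
    · by_cases hx : x ∈ X₁
      · refine ⟨(inl x, inr x), ⟨⟨x, Or.inl ⟨hx, rfl⟩⟩, Or.inl rfl⟩, ?_⟩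
        rintro q ⟨⟨x', ⟨hx', rfl⟩ | ⟨hx', rfl⟩⟩, hq2 | hq2⟩ <;> simp_all
      · refine ⟨(inr x, inl x), ⟨⟨x, Or.inr ⟨hx, rfl⟩⟩, Or.inr rfl⟩, ?_⟩
        rintro q ⟨⟨x', ⟨hx', rfl⟩ | ⟨hx', rfl⟩⟩, hq2 | hq2⟩ <;> simp_all
    · by_cases hx : x ∈ X₁
      · refine ⟨(inl x, inr x), ⟨⟨x, Or.inl ⟨hx, rfl⟩⟩, Or.inr rfl⟩, ?_⟩
        rintro q ⟨⟨x', ⟨hx', rfl⟩ | ⟨hx', rfl⟩⟩, hq2 | hq2⟩ <;> simp_all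
      · refine ⟨(inr x, inl x), ⟨⟨x, Or.inr ⟨hx, rfl⟩⟩, Or.inl rfl⟩, ?_⟩
        rintro q ⟨⟨x', ⟨hx', rfl⟩ | ⟨hx', rfl⟩⟩, hq2 | hq2⟩ <;> simp_all
  · rintro p ⟨x, ⟨hx, rfl⟩ | ⟨hx, rfl⟩⟩ <;> simp [hx]

section EpsSeq

lemma edge_eps_left₁ {x : X₂} (h : x ∈ X₁) :
    EdgeMem (epsCheck X₁) α (false, ((inl x : X₂ ⊕ X₂ ⊕ Y₂), inr (inl x))) :=
  edgeMem_iff.2 (Or.inl ⟨rfl, (inl x, inr x), ⟨x, Or.inl ⟨h, rfl⟩⟩, rfl, rfl⟩)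

lemma edge_eps_left₂ {x : X₂} (h : x ∉ X₁) :
    EdgeMem (epsCheck X₁) α (false, ((inr (inl x) : X₂ ⊕ X₂ ⊕ Y₂), inl x)) :=
  edgeMem_iff.2 (Or.inl ⟨rfl, (inr x, inl x), ⟨x, Or.inr ⟨h, rfl⟩⟩, rfl, rfl⟩)

lemma edge_eps_left₃ {p : (X₂ ⊕ Y₂) × (X₂ ⊕ Y₂)} (h : p ∈ α) :
    EdgeMem (epsCheck X₁) α (true, ((ι₂ p.1 : X₂ ⊕ X₂ ⊕ Y₂), ι₂ p.2)) :=
  edgeMem_iff.2 (Or.inr ⟨rfl, p, h, rfl, rfl⟩)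

/-- Canonical connected sequence for the pair `(ε̌, α)` through a given edge. -/
lemma epsL_seq (hα : Admissible X₁ Y₁ α) {p : (X₂ ⊕ Y₂) × (X₂ ⊕ Y₂)} (hp : p ∈ α) :
    ∃ L, ConnectsVia (epsCheck X₁) α L p.1 p.2 ∧
      (true, ((ι₂ p.1 : X₂ ⊕ X₂ ⊕ Y₂), ι₂ p.2)) ∈ L ∧
      (∀ x : X₂, p.1 = inl x →
        (false, ((inl x : X₂ ⊕ X₂ ⊕ Y₂), inr (inl x))) ∈ L) ∧
      (∀ x : X₂, p.2 = inl x →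
        (false, ((inr (inl x) : X₂ ⊕ X₂ ⊕ Y₂), inl x)) ∈ L) := by
  have hd1 := (hα.2 p hp).1
  have hd2 := (hα.2 p hp).2
  obtain ⟨p1, p2⟩ := p
  simp only at hd1 hd2 ⊢
  rcases p1 with x | y <;> rcases p2 with x' | y' <;> simp only [Sum.elim_inl, Sum.elim_inr] at hd1 hd2
  · -- p = (inl x, inl x')
    refine ⟨[(false, (inl x, inr (inl x))), (true, (inr (inl x), inr (inl x'))),
        (false, (inr (inl x'), inl x'))], ⟨⟨by simp, ?_, ?_⟩, by simp, by simp⟩,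
        by simp, by simp, by simp⟩
    · rintro e he
      simp only [List.mem_cons, List.not_mem_nil, or_false] at he
      rcases he with rfl | rfl | rfl
      · exact edge_eps_left₁ hd1
      · exact edge_eps_left₃ (p := (inl x, inl x')) hp
      · exact edge_eps_left₂ hd2
    · exact List.isChain_cons_cons.2 ⟨⟨by simp, rfl⟩, List.isChain_cons_cons.2 ⟨⟨by simp, rfl⟩, by simp⟩⟩
  · -- p = (inl x, inr y')
    refine ⟨[(false, (inl x, inr (inl x))), (true, (inr (inl x), inr (inr y')))],
        ⟨⟨by simp, ?_, ?_⟩, by simp, by simp⟩, by simp, by simp, by simp⟩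
    · rintro e he
      simp only [List.mem_cons, List.not_mem_nil, or_false] at he
      rcases he with rfl | rfl
      · exact edge_eps_left₁ hd1
      · exact edge_eps_left₃ (p := (inl x, inr y')) hp
    · exact List.isChain_cons_cons.2 ⟨⟨by simp, rfl⟩, by simp⟩
  · -- p = (inr y, inl x')
    refine ⟨[(true, (inr (inr y), inr (inl x'))), (false, (inr (inl x'), inl x'))],
        ⟨⟨by simp, ?_, ?_⟩, by simp, by simp⟩, by simp, by simp, by simp⟩
    · rintro e he
      simp only [List.mem_cons, List.not_mem_nil, or_false] at he
      rcases he with rfl | rfl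
      · exact edge_eps_left₃ (p := (inr y, inl x')) hp
      · exact edge_eps_left₂ hd2
    · exact List.isChain_cons_cons.2 ⟨⟨by simp, rfl⟩, by simp⟩
  · -- p = (inr y, inr y')
    refine ⟨[(true, (inr (inr y), inr (inr y')))],
        ⟨⟨by simp, ?_, by simp [List.Chain']⟩, by simp, by simp⟩, by simp, by simp, by simp⟩
    rintro e he
    simp only [List.mem_cons, List.not_mem_nil, or_false] at he
    rcases he with rfl
    exact edge_eps_left₃ (p := (inr y, inr y')) hp

lemma edge_eps_right₁ {p : (X₂ ⊕ Y₂) × (X₂ ⊕ Y₂)} (h : p ∈ α) :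
    EdgeMem α (epsCheck Y₁) (false, ((ι₁ p.1 : X₂ ⊕ Y₂ ⊕ Y₂), ι₁ p.2)) :=
  edgeMem_iff.2 (Or.inl ⟨rfl, p, h, rfl, rfl⟩)

lemma edge_eps_right₂ {y : Y₂} (h : y ∈ Y₁) :
    EdgeMem α (epsCheck Y₁) (true, ((inr (inl y) : X₂ ⊕ Y₂ ⊕ Y₂), inr (inr y))) :=
  edgeMem_iff.2 (Or.inr ⟨rfl, (inl y, inr y), ⟨y, Or.inl ⟨h, rfl⟩⟩, rfl, rfl⟩)

lemma edge_eps_right₃ {y : Y₂} (h : y ∉ Y₁) :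
    EdgeMem α (epsCheck Y₁) (true, ((inr (inr y) : X₂ ⊕ Y₂ ⊕ Y₂), inr (inl y))) :=
  edgeMem_iff.2 (Or.inr ⟨rfl, (inr y, inl y), ⟨y, Or.inr ⟨h, rfl⟩⟩, rfl, rfl⟩)

/-- Canonical connected sequence for the pair `(α, ε̌)` through a given edge. -/
lemma epsR_seq (hα : Admissible X₁ Y₁ α) {p : (X₂ ⊕ Y₂) × (X₂ ⊕ Y₂)} (hp : p ∈ α) :
    ∃ L, ConnectsVia α (epsCheck Y₁) L p.1 p.2 ∧
      (false, ((ι₁ p.1 : X₂ ⊕ Y₂ ⊕ Y₂), ι₁ p.2)) ∈ L ∧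
      (∀ y : Y₂, p.1 = inr y →
        (true, ((inr (inr y) : X₂ ⊕ Y₂ ⊕ Y₂), inr (inl y))) ∈ L) ∧
      (∀ y : Y₂, p.2 = inr y →
        (true, ((inr (inl y) : X₂ ⊕ Y₂ ⊕ Y₂), inr (inr y))) ∈ L) := by
  have hd1 := (hα.2 p hp).1
  have hd2 := (hα.2 p hp).2
  obtain ⟨p1, p2⟩ := p
  simp only at hd1 hd2 ⊢
  rcases p1 with x | y <;> rcases p2 with x' | y' <;> simp only [Sum.elim_inl, Sum.elim_inr] at hd1 hd2
  · -- p = (inl x, inl x')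
    refine ⟨[(false, (inl x, inl x'))],
        ⟨⟨by simp, ?_, by simp [List.Chain']⟩, by simp, by simp⟩, by simp, by simp, by simp⟩
    rintro e he
    simp only [List.mem_cons, List.not_mem_nil, or_false] at he
    rcases he with rfl
    exact edge_eps_right₁ (p := (inl x, inl x')) hp
  · -- p = (inl x, inr y')
    refine ⟨[(false, (inl x, inr (inl y'))), (true, (inr (inl y'), inr (inr y')))],
        ⟨⟨by simp, ?_, ?_⟩, by simp, by simp⟩, by simp, by simp, by simp⟩
    · rintro e he
      simp only [List.mem_cons, List.not_mem_nil, or_false] at he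
      rcases he with rfl | rfl
      · exact edge_eps_right₁ (p := (inl x, inr y')) hp
      · exact edge_eps_right₂ hd2
    · exact List.isChain_cons_cons.2 ⟨⟨by simp, rfl⟩, by simp⟩
  · -- p = (inr y, inl x')
    refine ⟨[(true, (inr (inr y), inr (inl y))), (false, (inr (inl y), inl x'))],
        ⟨⟨by simp, ?_, ?_⟩, by simp, by simp⟩, by simp, by simp, by simp⟩
    · rintro e he
      simp only [List.mem_cons, List.not_mem_nil, or_false] at he
      rcases he with rfl | rfl
      · exact edge_eps_right₃ hd1
      · exact edge_eps_right₁ (p := (inr y, inl x')) hp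
    · exact List.isChain_cons_cons.2 ⟨⟨by simp, rfl⟩, by simp⟩
  · -- p = (inr y, inr y')
    refine ⟨[(true, (inr (inr y), inr (inl y))), (false, (inr (inl y), inr (inl y'))),
        (true, (inr (inl y'), inr (inr y')))],
        ⟨⟨by simp, ?_, ?_⟩, by simp, by simp⟩, by simp, by simp, by simp⟩
    · rintro e he
      simp only [List.mem_cons, List.not_mem_nil, or_false] at he
      rcases he with rfl | rfl | rfl
      · exact edge_eps_right₃ hd1
      · exact edge_eps_right₁ (p := (inr y, inr y')) hp
      · exact edge_eps_right₂ hd2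
    · exact List.isChain_cons_cons.2 ⟨⟨by simp, rfl⟩, List.isChain_cons_cons.2 ⟨⟨by simp, rfl⟩, by simp⟩⟩

/-- Part (iii): left identity. -/
theorem comp_eps_left (hα : Admissible X₁ Y₁ α) : comp α (epsCheck X₁) = α := by
  have hε := epsCheck_admissible X₁
  ext p
  constructor
  · rintro ⟨L, hL⟩
    have hsrc := (connects_mem hε hα hL).1
    obtain ⟨q, hq, hq1⟩ := exists_src hα hsrc
    obtain ⟨L₀, hL₀, -, -, -⟩ := epsL_seq hα hq
    rw [hq1] at hL₀
    obtain ⟨-, h2⟩ := connects_det hε hα hL hL₀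
    have : p = q := Prod.ext hq1.symm h2
    rw [this]
    exact hq
  · intro hp
    obtain ⟨L, hL, -, -, -⟩ := epsL_seq hα hp
    exact ⟨L, hL⟩

/-- Part (iii): right identity. -/
theorem comp_eps_right (hα : Admissible X₁ Y₁ α) : comp (epsCheck Y₁) α = α := by
  have hε := epsCheck_admissible Y₁
  ext p
  constructor
  · rintro ⟨L, hL⟩
    have hsrc := (connects_mem hα hε hL).1
    obtain ⟨q, hq, hq1⟩ := exists_src hα hsrc
    obtain ⟨L₀, hL₀, -, -, -⟩ := epsR_seq hα hq
    rw [hq1] at hL₀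
    obtain ⟨-, h2⟩ := connects_det hα hε hL hL₀
    have : p = q := Prod.ext hq1.symm h2
    rw [this]
    exact hq
  · intro hp
    obtain ⟨L, hL, -, -, -⟩ := epsR_seq hα hp
    exact ⟨L, hL⟩

/-- Part (iii): no frothy cycles for `(ε̌, α)`. -/
theorem fPBR_eps_left (hα : Admissible X₁ Y₁ α) : fPBR (epsCheck X₁) α = 0 := by
  have hemp : IsEmpty (FrothyCycles (epsCheck X₁) α) := by
    constructor
    rintro ⟨L, ⟨hne, hval, -⟩, -, -, -, hfro⟩
    cases L with
    | nil => exact hne rfl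
    | cons e T =>
    obtain ⟨he, hnot⟩ := hfro e (by simp)
    obtain ⟨eb, e1, e2⟩ := e
    rcases edgeMem_iff.1 he with ⟨hb, q, hq, h1, h2⟩ | ⟨hb, q, hq, h1, h2⟩ <;>
      simp only at hb h1 h2 <;> subst hb <;> subst h1 <;> subst h2
    · obtain ⟨x, ⟨hx, rfl⟩ | ⟨hx, rfl⟩⟩ := hq
      · obtain ⟨r, hr, hr1⟩ := exists_src hα (s := (inl x : X₂ ⊕ Y₂)) (by simpa using hx)
        obtain ⟨L₀, hc, -, hm, -⟩ := epsL_seq hα hr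
        exact hnot L₀ _ _ hc (by simpa using hm x hr1)
      · obtain ⟨r, hr, hr2⟩ := exists_tgt hα (s := (inl x : X₂ ⊕ Y₂)) (by simpa using hx)
        obtain ⟨L₀, hc, -, -, hm⟩ := epsL_seq hα hr
        exact hnot L₀ _ _ hc (by simpa using hm x hr2)
    · obtain ⟨L₀, hc, hm, -, -⟩ := epsL_seq hα hq
      exact hnot L₀ _ _ hc hm
  rw [fPBR]
  haveI : IsEmpty
      (Quot fun L L' : FrothyCycles (epsCheck X₁) α => ∃ e, e ∈ L.1 ∧ e ∈ L'.1) :=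
    ⟨fun q => Quot.ind (β := fun _ => False) (fun a => hemp.false a) q⟩
  exact Nat.card_of_isEmpty

/-- Part (iii): no frothy cycles for `(α, ε̌)`. -/
theorem fPBR_eps_right (hα : Admissible X₁ Y₁ α) : fPBR α (epsCheck Y₁) = 0 := by
  have hemp : IsEmpty (FrothyCycles α (epsCheck Y₁)) := by
    constructor
    rintro ⟨L, ⟨hne, hval, -⟩, -, -, -, hfro⟩
    cases L with
    | nil => exact hne rfl
    | cons e T =>
    obtain ⟨he, hnot⟩ := hfro e (by simp)
    obtain ⟨eb, e1, e2⟩ := e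
    rcases edgeMem_iff.1 he with ⟨hb, q, hq, h1, h2⟩ | ⟨hb, q, hq, h1, h2⟩ <;>
      simp only at hb h1 h2 <;> subst hb <;> subst h1 <;> subst h2
    · obtain ⟨L₀, hc, hm, -, -⟩ := epsR_seq hα hq
      exact hnot L₀ _ _ hc hm
    · obtain ⟨y, ⟨hy, rfl⟩ | ⟨hy, rfl⟩⟩ := hq
      · obtain ⟨r, hr, hr2⟩ := exists_tgt hα (s := (inr y : X₂ ⊕ Y₂)) (by simpa using hy)
        obtain ⟨L₀, hc, -, -, hm⟩ := epsR_seq hα hr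
        exact hnot L₀ _ _ hc (by simpa using hm y hr2)
      · obtain ⟨r, hr, hr1⟩ := exists_src hα (s := (inr y : X₂ ⊕ Y₂)) (by simpa using hy)
        obtain ⟨L₀, hc, -, hm, -⟩ := epsR_seq hα hr
        exact hnot L₀ _ _ hc (by simpa using hm y hr1)
  rw [fPBR]
  haveI : IsEmpty
      (Quot fun L L' : FrothyCycles α (epsCheck Y₁) => ∃ e, e ∈ L.1 ∧ e ∈ L'.1) :=
    ⟨fun q => Quot.ind (β := fun _ => False) (fun a => hemp.false a) q⟩
  exact Nat.card_of_isEmpty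

end EpsSeq

end Aux

/-- Admissible oriented Brauer diagrams are closed under composition, the
diagrams `ε̌` are admissible two-sided identities with `𝔣((ε̌,α)) = 0 = 𝔣((α,ε̌))`;
hence admissible oriented Brauer diagrams paired with elements of `ℕ₀`, under
the deformed composition `(β,m)⋄(α,k) = (β∘α, m+k+𝔣((α,β)))`, form the
oriented Brauer category. -/
theorem oriented_brauer_category :
    (∀ (X₂ Y₂ Z₂ : Type) [Fintype X₂] [Fintype Y₂] [Fintype Z₂]
      (X₁ : Set X₂) (Y₁ : Set Y₂) (Z₁ : Set Z₂) (α : PBR X₂ Y₂) (β : PBR Y₂ Z₂),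
      Admissible X₁ Y₁ α → Admissible Y₁ Z₁ β → Admissible X₁ Z₁ (comp β α)) ∧
    (∀ (X₂ : Type) [Fintype X₂] (X₁ : Set X₂),
      Admissible X₁ X₁ (epsCheck X₁)) ∧
    (∀ (X₂ Y₂ : Type) [Fintype X₂] [Fintype Y₂]
      (X₁ : Set X₂) (Y₁ : Set Y₂) (α : PBR X₂ Y₂), Admissible X₁ Y₁ α →
      comp α (epsCheck X₁) = α ∧ comp (epsCheck Y₁) α = α ∧
      fPBR (epsCheck X₁) α = 0 ∧ fPBR α (epsCheck Y₁) = 0) :=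
  ⟨fun _ _ _ _ _ _ _ _ _ _ _ hα hβ => comp_admissible hα hβ,
   fun _ _ X₁ => epsCheck_admissible X₁,
   fun _ _ _ _ _ _ _ hα =>
     ⟨comp_eps_left hα, comp_eps_right hα, fPBR_eps_left hα, fPBR_eps_right hα⟩⟩

end PBRPaper
end

section
/- The map α ↦ (α₁₂, α₂₁) is a bijection from the set of pure PBRs on (X,Y) onto the set of pairs (θ,γ) of binary relations with θ ⊆ X×Y and γ ⊆ Y×X, and it is compatible with composition: for a pure PBR α on (X,Y) and a pure PBR β on (Y,Z) one has (β∘α)₁₂ = β₁₂∘α₁₂ and (β∘α)₂₁ = α₂₁∘β₂₁, where ∘ on the right denotes usual composition of binary relations (η∘θ = {(x,z) : ∃y, (x,y) ∈ θ and (y,z) ∈ η}). Hence the category of pure PBRs is isomorphic to the double 𝔅^⋉ of the category of binary relations, whose morphisms X → Z are pairs (β,γ) with β ∈ 𝔅(X,Z), γ ∈ 𝔅^op(X,Z) and composition (β',γ')(β,γ) = (β'β, γγ'). -/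
namespace PBRPaper

variable {X Y Z : Type}

variable {X Y : Type} in
/-- A PBR is pure if every edge has one endpoint in the domain copy of `X` and
the other in the codomain copy of `Y` (in either order). -/
def IsPure (α : PBR X Y) : Prop :=
  ∀ p ∈ α, (∃ (x : X) (y : Y), p = (Sum.inl x, Sum.inr y)) ∨
    ∃ (y : Y) (x : X), p = (Sum.inr y, Sum.inl x)

variable {X Y : Type} in
/-- The component `α₁₂ ⊆ X × Y` of a PBR `α` on `(X,Y)`. -/
def c12 (α : PBR X Y) : Set (X × Y) :=
  {q | (Sum.inl q.1, Sum.inr q.2) ∈ α}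

variable {X Y : Type} in
/-- The component `α₂₁ ⊆ Y × X` of a PBR `α` on `(X,Y)`. -/
def c21 (α : PBR X Y) : Set (Y × X) :=
  {q | (Sum.inr q.1, Sum.inl q.2) ∈ α}

section Aux
variable {X Y Z : Type}

lemma edgeMem_false_iff (α : PBR X Y) (β : PBR Y Z) (hα : IsPure α)
    (u v : X ⊕ Y ⊕ Z) :
    EdgeMem α β (false, u, v) ↔
      (∃ x y, (Sum.inl x, Sum.inr y) ∈ α ∧ u = Sum.inl x ∧ v = Sum.inr (Sum.inl y)) ∨
      (∃ y x, (Sum.inr y, Sum.inl x) ∈ α ∧ u = Sum.inr (Sum.inl y) ∧ v = Sum.inl x) := by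
  unfold EdgeMem
  simp only [Bool.false_eq_true, if_false]
  constructor
  · rintro ⟨p, hp, h1, h2⟩
    rcases hα p hp with ⟨x, y, rfl⟩ | ⟨y, x, rfl⟩
    · simp only [ι₁, Sum.elim_inl, Sum.elim_inr] at h1 h2
      exact Or.inl ⟨x, y, hp, h1.symm, h2.symm⟩
    · simp only [ι₁, Sum.elim_inl, Sum.elim_inr] at h1 h2
      exact Or.inr ⟨y, x, hp, h1.symm, h2.symm⟩
  · rintro (⟨x, y, hp, rfl, rfl⟩ | ⟨y, x, hp, rfl, rfl⟩)
    · exact ⟨(Sum.inl x, Sum.inr y), hp, by simp [ι₁], by simp [ι₁]⟩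
    · exact ⟨(Sum.inr y, Sum.inl x), hp, by simp [ι₁], by simp [ι₁]⟩

lemma edgeMem_true_iff (α : PBR X Y) (β : PBR Y Z) (hβ : IsPure β)
    (u v : X ⊕ Y ⊕ Z) :
    EdgeMem α β (true, u, v) ↔
      (∃ y z, (Sum.inl y, Sum.inr z) ∈ β ∧ u = Sum.inr (Sum.inl y) ∧
        v = Sum.inr (Sum.inr z)) ∨
      (∃ z y, (Sum.inr z, Sum.inl y) ∈ β ∧ u = Sum.inr (Sum.inr z) ∧
        v = Sum.inr (Sum.inl y)) := by
  unfold EdgeMem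
  simp only [if_true]
  constructor
  · rintro ⟨p, hp, h1, h2⟩
    rcases hβ p hp with ⟨y, z, rfl⟩ | ⟨z, y, rfl⟩
    · simp only [ι₂, Sum.elim_inl, Sum.elim_inr] at h1 h2
      exact Or.inl ⟨y, z, hp, h1.symm, h2.symm⟩
    · simp only [ι₂, Sum.elim_inl, Sum.elim_inr] at h1 h2
      exact Or.inr ⟨z, y, hp, h1.symm, h2.symm⟩
  · rintro (⟨y, z, hp, rfl, rfl⟩ | ⟨z, y, hp, rfl, rfl⟩)
    · exact ⟨(Sum.inl y, Sum.inr z), hp, by simp [ι₂], by simp [ι₂]⟩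
    · exact ⟨(Sum.inr z, Sum.inl y), hp, by simp [ι₂], by simp [ι₂]⟩

lemma c12_comp (α : PBR X Y) (β : PBR Y Z) (hα : IsPure α) (hβ : IsPure β) :
    c12 (comp β α) = relComp (c12 β) (c12 α) := by
  ext ⟨x, z⟩
  constructor
  · rintro ⟨L, ⟨hne, hmem, hch⟩, hhead, hlast⟩
    match L with
    | [] => exact absurd rfl hne
    | [(b, u, v)] =>
      simp only [List.head?, List.getLast?, Option.map_some, Option.some.injEq, ι₀,
        Sum.elim_inl, Sum.elim_inr] at hhead hlast
      subst hhead hlast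
      have he := hmem _ (List.mem_singleton.mpr rfl)
      cases b
      · rcases (edgeMem_false_iff α β hα _ _).1 he with ⟨_, _, _, _, h⟩ | ⟨_, _, _, h, _⟩ <;>
          simp_all
      · rcases (edgeMem_true_iff α β hβ _ _).1 he with ⟨_, _, _, h, _⟩ | ⟨_, _, _, h, _⟩ <;>
          simp_all
    | (b, u, v) :: (b', u', v') :: rest =>
      simp only [List.head?, Option.map_some, Option.some.injEq, ι₀, Sum.elim_inl] at hhead
      subst hhead
      have he := hmem _ List.mem_cons_self
      have hf := hmem _ (List.mem_cons.2 (Or.inr List.mem_cons_self))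
      simp only [List.Chain', List.isChain_cons_cons] at hch
      obtain ⟨⟨hbb, huv⟩, hch'⟩ := hch
      cases b
      · rcases (edgeMem_false_iff α β hα _ _).1 he with
          ⟨x', y, hxy, hx, hv⟩ | ⟨_, _, _, h, _⟩
        · obtain rfl : x' = x := by simpa using hx.symm
          cases b'
          · exact absurd rfl hbb
          rcases (edgeMem_true_iff α β hβ _ _).1 hf with
              ⟨y', z', hyz, hu', hv'⟩ | ⟨z', y', hyz, hu', hv'⟩
          · obtain rfl : y' = y := by
              rw [hv, hu'] at huv
              simpa using huv.symm
            match rest with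
            | [] =>
              simp only [List.getLast?, Option.map_some, Option.some.injEq, ι₀,
                Sum.elim_inr, hv'] at hlast
              obtain rfl : z' = z := by simp_all
              exact ⟨_, hxy, hyz⟩
            | (b'', u'', v'') :: rest' =>
              rw [List.isChain_cons_cons] at hch'
              obtain ⟨⟨hbb', huv'⟩, _⟩ := hch'
              have hg := hmem _ (List.mem_cons.2 (Or.inr (List.mem_cons.2
                (Or.inr List.mem_cons_self))))
              cases b''
              · rcases (edgeMem_false_iff α β hα _ _).1 hg with
                  ⟨_, _, _, h, _⟩ | ⟨_, _, _, h, _⟩ <;> simp_all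
              · exact absurd rfl hbb'
          · rw [hv] at huv; simp_all
        · simp_all
      · rcases (edgeMem_true_iff α β hβ _ _).1 he with
          ⟨_, _, _, h, _⟩ | ⟨_, _, _, h, _⟩ <;> simp_all
  · rintro ⟨y, h1, h2⟩
    refine ⟨[(false, Sum.inl x, Sum.inr (Sum.inl y)),
      (true, Sum.inr (Sum.inl y), Sum.inr (Sum.inr z))], ⟨⟨by simp, ?_, ?_⟩, ?_, ?_⟩⟩
    · intro e he
      simp only [List.mem_cons, List.not_mem_nil, or_false] at he
      rcases he with rfl | rfl
      · exact (edgeMem_false_iff α β hα _ _).2 (Or.inl ⟨x, y, h1, rfl, rfl⟩)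
      · exact (edgeMem_true_iff α β hβ _ _).2 (Or.inl ⟨y, z, h2, rfl, rfl⟩)
    · simp [List.Chain']
    · simp [ι₀]
    · simp [List.getLast?, ι₀]

lemma c21_comp (α : PBR X Y) (β : PBR Y Z) (hα : IsPure α) (hβ : IsPure β) :
    c21 (comp β α) = relComp (c21 α) (c21 β) := by
  ext ⟨z, x⟩
  constructor
  · rintro ⟨L, ⟨hne, hmem, hch⟩, hhead, hlast⟩
    match L with
    | [] => exact absurd rfl hne
    | [(b, u, v)] =>
      simp only [List.head?, List.getLast?, Option.map_some, Option.some.injEq, ι₀,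
        Sum.elim_inl, Sum.elim_inr] at hhead hlast
      subst hhead hlast
      have he := hmem _ (List.mem_singleton.mpr rfl)
      cases b
      · rcases (edgeMem_false_iff α β hα _ _).1 he with ⟨_, _, _, h, _⟩ | ⟨_, _, _, h, _⟩ <;>
          simp_all
      · rcases (edgeMem_true_iff α β hβ _ _).1 he with ⟨_, _, _, h, _⟩ | ⟨_, _, _, _, h⟩ <;>
          simp_all
    | (b, u, v) :: (b', u', v') :: rest =>
      simp only [List.head?, Option.map_some, Option.some.injEq, ι₀, Sum.elim_inr] at hhead
      subst hhead
      have he := hmem _ List.mem_cons_self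
      have hf := hmem _ (List.mem_cons.2 (Or.inr List.mem_cons_self))
      simp only [List.Chain', List.isChain_cons_cons] at hch
      obtain ⟨⟨hbb, huv⟩, hch'⟩ := hch
      cases b
      · rcases (edgeMem_false_iff α β hα _ _).1 he with
          ⟨_, _, _, h, _⟩ | ⟨_, _, _, h, _⟩ <;> simp_all
      · rcases (edgeMem_true_iff α β hβ _ _).1 he with
          ⟨_, _, _, h, _⟩ | ⟨z', y, hzy, hz, hv⟩
        · simp_all
        obtain rfl : z' = z := by simp_all
        cases b'
        swap
        · exact absurd rfl hbb
        rcases (edgeMem_false_iff α β hα _ _).1 hf with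
            ⟨x', y', hxy, hu', hv'⟩ | ⟨y', x', hyx, hu', hv'⟩
        · rw [hv] at huv; simp_all
        · obtain rfl : y' = y := by
            rw [hv, hu'] at huv
            simpa using huv.symm
          match rest with
          | [] =>
            simp only [List.getLast?, Option.map_some, Option.some.injEq, ι₀,
              Sum.elim_inl, hv'] at hlast
            obtain rfl : x' = x := by simp_all
            exact ⟨_, hzy, hyx⟩
          | (b'', u'', v'') :: rest' =>
            rw [List.isChain_cons_cons] at hch'
            obtain ⟨⟨hbb', huv'⟩, _⟩ := hch'
            have hg := hmem _ (List.mem_cons.2 (Or.inr (List.mem_cons.2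
              (Or.inr List.mem_cons_self))))
            cases b''
            · exact absurd rfl hbb'
            · rcases (edgeMem_true_iff α β hβ _ _).1 hg with
                ⟨_, _, _, h, _⟩ | ⟨_, _, _, h, _⟩ <;> simp_all
  · rintro ⟨y, h1, h2⟩
    refine ⟨[(true, Sum.inr (Sum.inr z), Sum.inr (Sum.inl y)),
      (false, Sum.inr (Sum.inl y), Sum.inl x)], ⟨⟨by simp, ?_, ?_⟩, ?_, ?_⟩⟩
    · intro e he
      simp only [List.mem_cons, List.not_mem_nil, or_false] at he
      rcases he with rfl | rfl
      · exact (edgeMem_true_iff α β hβ _ _).2 (Or.inr ⟨z, y, h1, rfl, rfl⟩)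
      · exact (edgeMem_false_iff α β hα _ _).2 (Or.inr ⟨y, x, h2, rfl, rfl⟩)
    · simp [List.Chain']
    · simp [ι₀]
    · simp [List.getLast?, ι₀]

end Aux

/-- `α ↦ (α₁₂, α₂₁)` is a bijection from pure PBRs on `(X,Y)` onto pairs of
binary relations `θ ⊆ X×Y`, `γ ⊆ Y×X`, compatible with composition:
`(β∘α)₁₂ = β₁₂∘α₁₂` and `(β∘α)₂₁ = α₂₁∘β₂₁`. Hence the category of pure PBRs
is isomorphic to the double `𝔅^⋉` of the category of binary relations. -/
theorem pure_pbr_double_of_binary_relations (X Y Z : Type)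
    [Fintype X] [Fintype Y] [Fintype Z] :
    Function.Bijective
      (fun α : {α : PBR X Y // IsPure α} => (c12 α.1, c21 α.1)) ∧
    (∀ (α : PBR X Y) (β : PBR Y Z), IsPure α → IsPure β →
      c12 (comp β α) = relComp (c12 β) (c12 α) ∧
      c21 (comp β α) = relComp (c21 α) (c21 β)) := by
  refine ⟨⟨?_, ?_⟩, fun α β hα hβ => ⟨c12_comp α β hα hβ, c21_comp α β hα hβ⟩⟩
  · rintro ⟨α, hα⟩ ⟨α', hα'⟩ h
    simp only [Prod.mk.injEq] at h
    obtain ⟨h12, h21⟩ := h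
    ext p
    constructor
    · intro hp
      rcases hα p hp with ⟨x, y, rfl⟩ | ⟨y, x, rfl⟩
      · exact (Set.ext_iff.1 h12 (x, y)).1 hp
      · exact (Set.ext_iff.1 h21 (y, x)).1 hp
    · intro hp
      rcases hα' p hp with ⟨x, y, rfl⟩ | ⟨y, x, rfl⟩
      · exact (Set.ext_iff.1 h12 (x, y)).2 hp
      · exact (Set.ext_iff.1 h21 (y, x)).2 hp
  · rintro ⟨θ, γ⟩
    refine ⟨⟨{p | (∃ q ∈ θ, p = (Sum.inl q.1, Sum.inr q.2)) ∨
      ∃ q ∈ γ, p = (Sum.inr q.1, Sum.inl q.2)}, ?_⟩, ?_⟩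
    · rintro p (⟨q, hq, rfl⟩ | ⟨q, hq, rfl⟩)
      · exact Or.inl ⟨q.1, q.2, rfl⟩
      · exact Or.inr ⟨q.1, q.2, rfl⟩
    · simp only [Prod.mk.injEq]
      constructor
      · ext ⟨x, y⟩
        simp [c12]
      · ext ⟨y, x⟩
        simp [c21]

end PBRPaper
end

section
/- For a finite set X and a binary relation θ ⊆ X×X, let L(θ) be the PBR on (X,X) consisting of all edges of ε_X together with the edges (y^(c),y'^(c)) for (y,y') ∈ θ. Then: (i) L(θ)∘L(θ') = L(θ ∪ θ') for all θ, θ' ⊆ X×X; (ii) L is injective and its image is exactly the set PI(X,l) of left polarized idempotents on (X,X). Consequently PI(X,l) is a submonoid of the monoid of PBRs on (X,X) under composition, isomorphic to the commutative band (semilattice) of binary relations on X under union, and |PI(X,l)| = 2^{|X|²}; the analogous statements hold for the set PI(X,r) of right polarized idempotents. -/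
namespace PBRPaper

variable {X Y Z : Type}

variable {X : Type} in
/-- `L(θ)`: the left polarized idempotent with codomain-codomain edges given
by `θ`. -/
def Lmap (θ : Set (X × X)) : PBR X X :=
  eps X ∪ {p | ∃ q ∈ θ, p = (Sum.inr q.1, Sum.inr q.2)}

variable {X : Type} in
/-- `R(θ)`: the right polarized idempotent with domain-domain edges given
by `θ`. -/
def Rmap (θ : Set (X × X)) : PBR X X :=
  eps X ∪ {p | ∃ q ∈ θ, p = (Sum.inl q.1, Sum.inl q.2)}

variable {X : Type} in
/-- A left polarized idempotent: a PBR on `(X,X)` containing all edges of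
`ε_X`, any other edge joining two elements of the codomain copy. -/
def IsLeftPol (α : PBR X X) : Prop :=
  eps X ⊆ α ∧ ∀ p ∈ α, p ∈ eps X ∨ ∃ y y' : X, p = (Sum.inr y, Sum.inr y')

variable {X : Type} in
/-- A right polarized idempotent: a PBR on `(X,X)` containing all edges of
`ε_X`, any other edge joining two elements of the domain copy. -/
def IsRightPol (α : PBR X X) : Prop :=
  eps X ⊆ α ∧ ∀ p ∈ α, p ∈ eps X ∨ ∃ x x' : X, p = (Sum.inl x, Sum.inl x')
section Helpers

variable {X : Type}

private abbrev Am (x : X) : X ⊕ X ⊕ X := Sum.inl x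
private abbrev Mm (x : X) : X ⊕ X ⊕ X := Sum.inr (Sum.inl x)
private abbrev Cm (x : X) : X ⊕ X ⊕ X := Sum.inr (Sum.inr x)

lemma edgeF_L {θ' θ : Set (X × X)} {u v : X ⊕ X ⊕ X} :
    EdgeMem (Lmap θ') (Lmap θ) (false, u, v) ↔
      (∃ x : X, (u = Am x ∧ v = Mm x) ∨ (u = Mm x ∧ v = Am x)) ∨
      (∃ q ∈ θ', u = Mm q.1 ∧ v = Mm q.2) := by
  show (∃ p ∈ Lmap θ', ι₁ p.1 = u ∧ ι₁ p.2 = v) ↔ _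
  constructor
  · rintro ⟨p, ⟨x, rfl | rfl⟩ | ⟨q, hq, rfl⟩, rfl, rfl⟩
    · exact Or.inl ⟨x, Or.inl ⟨rfl, rfl⟩⟩
    · exact Or.inl ⟨x, Or.inr ⟨rfl, rfl⟩⟩
    · exact Or.inr ⟨q, hq, rfl, rfl⟩
  · rintro (⟨x, ⟨rfl, rfl⟩ | ⟨rfl, rfl⟩⟩ | ⟨q, hq, rfl, rfl⟩)
    · exact ⟨(Sum.inl x, Sum.inr x), Or.inl ⟨x, Or.inl rfl⟩, rfl, rfl⟩
    · exact ⟨(Sum.inr x, Sum.inl x), Or.inl ⟨x, Or.inr rfl⟩, rfl, rfl⟩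
    · exact ⟨(Sum.inr q.1, Sum.inr q.2), Or.inr ⟨q, hq, rfl⟩, rfl, rfl⟩

lemma edgeT_L {θ' θ : Set (X × X)} {u v : X ⊕ X ⊕ X} :
    EdgeMem (Lmap θ') (Lmap θ) (true, u, v) ↔
      (∃ x : X, (u = Mm x ∧ v = Cm x) ∨ (u = Cm x ∧ v = Mm x)) ∨
      (∃ q ∈ θ, u = Cm q.1 ∧ v = Cm q.2) := by
  show (∃ p ∈ Lmap θ, ι₂ p.1 = u ∧ ι₂ p.2 = v) ↔ _
  constructor
  · rintro ⟨p, ⟨x, rfl | rfl⟩ | ⟨q, hq, rfl⟩, rfl, rfl⟩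
    · exact Or.inl ⟨x, Or.inl ⟨rfl, rfl⟩⟩
    · exact Or.inl ⟨x, Or.inr ⟨rfl, rfl⟩⟩
    · exact Or.inr ⟨q, hq, rfl, rfl⟩
  · rintro (⟨x, ⟨rfl, rfl⟩ | ⟨rfl, rfl⟩⟩ | ⟨q, hq, rfl, rfl⟩)
    · exact ⟨(Sum.inl x, Sum.inr x), Or.inl ⟨x, Or.inl rfl⟩, rfl, rfl⟩
    · exact ⟨(Sum.inr x, Sum.inl x), Or.inl ⟨x, Or.inr rfl⟩, rfl, rfl⟩
    · exact ⟨(Sum.inr q.1, Sum.inr q.2), Or.inr ⟨q, hq, rfl⟩, rfl, rfl⟩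
lemma edgeF_R {θ' θ : Set (X × X)} {u v : X ⊕ X ⊕ X} :
    EdgeMem (Rmap θ') (Rmap θ) (false, u, v) ↔
      (∃ x : X, (u = Am x ∧ v = Mm x) ∨ (u = Mm x ∧ v = Am x)) ∨
      (∃ q ∈ θ', u = Am q.1 ∧ v = Am q.2) := by
  show (∃ p ∈ Rmap θ', ι₁ p.1 = u ∧ ι₁ p.2 = v) ↔ _
  constructor
  · rintro ⟨p, ⟨x, rfl | rfl⟩ | ⟨q, hq, rfl⟩, rfl, rfl⟩
    · exact Or.inl ⟨x, Or.inl ⟨rfl, rfl⟩⟩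
    · exact Or.inl ⟨x, Or.inr ⟨rfl, rfl⟩⟩
    · exact Or.inr ⟨q, hq, rfl, rfl⟩
  · rintro (⟨x, ⟨rfl, rfl⟩ | ⟨rfl, rfl⟩⟩ | ⟨q, hq, rfl, rfl⟩)
    · exact ⟨(Sum.inl x, Sum.inr x), Or.inl ⟨x, Or.inl rfl⟩, rfl, rfl⟩
    · exact ⟨(Sum.inr x, Sum.inl x), Or.inl ⟨x, Or.inr rfl⟩, rfl, rfl⟩
    · exact ⟨(Sum.inl q.1, Sum.inl q.2), Or.inr ⟨q, hq, rfl⟩, rfl, rfl⟩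

lemma edgeT_R {θ' θ : Set (X × X)} {u v : X ⊕ X ⊕ X} :
    EdgeMem (Rmap θ') (Rmap θ) (true, u, v) ↔
      (∃ x : X, (u = Mm x ∧ v = Cm x) ∨ (u = Cm x ∧ v = Mm x)) ∨
      (∃ q ∈ θ, u = Mm q.1 ∧ v = Mm q.2) := by
  show (∃ p ∈ Rmap θ, ι₂ p.1 = u ∧ ι₂ p.2 = v) ↔ _
  constructor
  · rintro ⟨p, ⟨x, rfl | rfl⟩ | ⟨q, hq, rfl⟩, rfl, rfl⟩
    · exact Or.inl ⟨x, Or.inl ⟨rfl, rfl⟩⟩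
    · exact Or.inl ⟨x, Or.inr ⟨rfl, rfl⟩⟩
    · exact Or.inr ⟨q, hq, rfl, rfl⟩
  · rintro (⟨x, ⟨rfl, rfl⟩ | ⟨rfl, rfl⟩⟩ | ⟨q, hq, rfl, rfl⟩)
    · exact ⟨(Sum.inl x, Sum.inr x), Or.inl ⟨x, Or.inl rfl⟩, rfl, rfl⟩
    · exact ⟨(Sum.inr x, Sum.inl x), Or.inl ⟨x, Or.inr rfl⟩, rfl, rfl⟩
    · exact ⟨(Sum.inl q.1, Sum.inl q.2), Or.inr ⟨q, hq, rfl⟩, rfl, rfl⟩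
lemma compL_sub (θ θ' : Set (X × X)) :
    comp (Lmap θ) (Lmap θ') ⊆ Lmap (θ ∪ θ') := by
  rintro ⟨a, b⟩ ⟨L, ⟨hne, hmem, hch⟩, hhead, hlast⟩
  rcases L with _ | ⟨⟨b1, u1, v1⟩, L⟩
  · exact absurd rfl hne
  rcases L with _ | ⟨⟨b2, u2, v2⟩, L⟩
  · -- [e1]
    simp only [List.head?_cons, List.getLast?_singleton, Option.map_some,
      Option.some.injEq] at hhead hlast
    have h1 := hmem (b1, u1, v1) (by simp)
    cases b1
    · rw [edgeF_L] at h1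
      rcases h1 with ⟨x, ⟨rfl, rfl⟩ | ⟨rfl, rfl⟩⟩ | ⟨q, hq, rfl, rfl⟩ <;>
        rcases a with a | a <;> rcases b with b | b <;> simp [ι₀] at hhead hlast
    · rw [edgeT_L] at h1
      rcases h1 with ⟨x, ⟨rfl, rfl⟩ | ⟨rfl, rfl⟩⟩ | ⟨⟨q1, q2⟩, hq, rfl, rfl⟩ <;>
        rcases a with a | a <;> rcases b with b | b <;> simp [ι₀] at hhead hlast
      subst_vars
      exact Or.inr ⟨_, Or.inl hq, rfl⟩
  rcases L with _ | ⟨⟨b3, u3, v3⟩, L⟩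
  · -- [e1, e2]
    simp only [List.head?_cons, Option.map_some, Option.some.injEq] at hhead
    have hlast' : v2 = ι₀ b := by simpa using hlast
    have h1 := hmem (b1, u1, v1) (by simp)
    have h2 := hmem (b2, u2, v2) (by simp)
    obtain ⟨⟨hbb, rfl⟩, -⟩ := List.isChain_cons_cons.mp hch
    cases b1 <;> cases b2 <;> try exact absurd rfl hbb
    · rw [edgeF_L] at h1; rw [edgeT_L] at h2
      rcases h1 with ⟨x, ⟨rfl, rfl⟩ | ⟨rfl, rfl⟩⟩ | ⟨⟨q1, q2⟩, hq, rfl, rfl⟩ <;>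
        rcases h2 with ⟨y, ⟨h, rfl⟩ | ⟨h, rfl⟩⟩ | ⟨⟨r1, r2⟩, hr, h, rfl⟩ <;>
        rcases a with a | a <;> rcases b with b | b <;>
          simp [ι₀] at hhead hlast' h <;> subst_vars
      exact Or.inl ⟨_, Or.inl rfl⟩
    · rw [edgeT_L] at h1; rw [edgeF_L] at h2
      rcases h1 with ⟨x, ⟨rfl, rfl⟩ | ⟨rfl, rfl⟩⟩ | ⟨⟨q1, q2⟩, hq, rfl, rfl⟩ <;>
        rcases h2 with ⟨y, ⟨h, rfl⟩ | ⟨h, rfl⟩⟩ | ⟨⟨r1, r2⟩, hr, h, rfl⟩ <;>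
        rcases a with a | a <;> rcases b with b | b <;>
          simp [ι₀] at hhead hlast' h <;> subst_vars
      exact Or.inl ⟨_, Or.inr rfl⟩
  rcases L with _ | ⟨⟨b4, u4, v4⟩, L⟩
  · -- [e1, e2, e3]
    simp only [List.head?_cons, Option.map_some, Option.some.injEq] at hhead
    have hlast' : v3 = ι₀ b := by simpa using hlast
    have h1 := hmem (b1, u1, v1) (by simp)
    have h2 := hmem (b2, u2, v2) (by simp)
    have h3 := hmem (b3, u3, v3) (by simp)
    obtain ⟨⟨hb12, rfl⟩, hch2⟩ := List.isChain_cons_cons.mp hch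
    obtain ⟨⟨hb23, rfl⟩, -⟩ := List.isChain_cons_cons.mp hch2
    cases b1 <;> cases b2 <;> try exact absurd rfl hb12
    all_goals cases b3 <;> try exact absurd rfl hb23
    · -- f t f
      rw [edgeF_L] at h1 h3; rw [edgeT_L] at h2
      rcases h1 with ⟨x, ⟨rfl, rfl⟩ | ⟨rfl, rfl⟩⟩ | ⟨⟨q1, q2⟩, hq, rfl, rfl⟩ <;>
        rcases h2 with ⟨y, ⟨h, rfl⟩ | ⟨h, rfl⟩⟩ | ⟨⟨r1, r2⟩, hr, h, rfl⟩ <;>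
        rcases h3 with ⟨w, ⟨h', rfl⟩ | ⟨h', rfl⟩⟩ | ⟨⟨s1, s2⟩, hs, h', rfl⟩ <;>
        rcases a with a | a <;> rcases b with b | b <;>
          simp [ι₀] at hhead hlast' h h'
    · -- t f t
      rw [edgeT_L] at h1 h3; rw [edgeF_L] at h2
      rcases h1 with ⟨x, ⟨rfl, rfl⟩ | ⟨rfl, rfl⟩⟩ | ⟨⟨q1, q2⟩, hq, rfl, rfl⟩ <;>
        rcases h2 with ⟨y, ⟨h, rfl⟩ | ⟨h, rfl⟩⟩ | ⟨⟨r1, r2⟩, hr, h, rfl⟩ <;>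
        rcases h3 with ⟨w, ⟨h', rfl⟩ | ⟨h', rfl⟩⟩ | ⟨⟨s1, s2⟩, hs, h', rfl⟩ <;>
        rcases a with a | a <;> rcases b with b | b <;>
          simp [ι₀] at hhead hlast' h h' <;> subst_vars
      exact Or.inr ⟨_, Or.inr hr, rfl⟩
  · -- length ≥ 4 : impossible
    exfalso
    simp only [List.head?_cons, Option.map_some, Option.some.injEq] at hhead
    have h1 := hmem (b1, u1, v1) (by simp)
    have h2 := hmem (b2, u2, v2) (by simp)
    have h3 := hmem (b3, u3, v3) (by simp)
    have h4 := hmem (b4, u4, v4) (by simp)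
    obtain ⟨⟨hb12, rfl⟩, hch2⟩ := List.isChain_cons_cons.mp hch
    obtain ⟨⟨hb23, rfl⟩, hch3⟩ := List.isChain_cons_cons.mp hch2
    obtain ⟨⟨hb34, rfl⟩, -⟩ := List.isChain_cons_cons.mp hch3
    cases b1 <;> cases b2 <;> try exact absurd rfl hb12
    all_goals cases b3 <;> try exact absurd rfl hb23
    all_goals cases b4 <;> try exact absurd rfl hb34
    · -- f t f t
      rw [edgeF_L] at h1 h3; rw [edgeT_L] at h2 h4
      rcases h1 with ⟨x, ⟨rfl, rfl⟩ | ⟨rfl, rfl⟩⟩ | ⟨⟨q1, q2⟩, hq, rfl, rfl⟩ <;>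
        rcases h2 with ⟨y, ⟨h, rfl⟩ | ⟨h, rfl⟩⟩ | ⟨⟨r1, r2⟩, hr, h, rfl⟩ <;>
        rcases h3 with ⟨w, ⟨h', rfl⟩ | ⟨h', rfl⟩⟩ | ⟨⟨s1, s2⟩, hs, h', rfl⟩ <;>
        rcases a with a | a <;>
          simp [ι₀] at hhead h h'
    · -- t f t f
      rw [edgeT_L] at h1 h3; rw [edgeF_L] at h2 h4
      rcases h1 with ⟨x, ⟨rfl, rfl⟩ | ⟨rfl, rfl⟩⟩ | ⟨⟨q1, q2⟩, hq, rfl, rfl⟩ <;>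
        rcases h2 with ⟨y, ⟨h, rfl⟩ | ⟨h, rfl⟩⟩ | ⟨⟨r1, r2⟩, hr, h, rfl⟩ <;>
        rcases h3 with ⟨w, ⟨h', rfl⟩ | ⟨h', rfl⟩⟩ | ⟨⟨s1, s2⟩, hs, h', rfl⟩ <;>
        rcases h4 with ⟨z, ⟨h'', rfl⟩ | ⟨h'', rfl⟩⟩ | ⟨⟨t1, t2⟩, ht, h'', rfl⟩ <;>
        rcases a with a | a <;>
          simp [ι₀] at hhead h h' h''
lemma compL_sup (θ θ' : Set (X × X)) :
    Lmap (θ ∪ θ') ⊆ comp (Lmap θ) (Lmap θ') := by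
  rintro ⟨a, b⟩ (⟨x, h | h⟩ | ⟨q, hq | hq, h⟩) <;>
    rw [Prod.mk.injEq] at h <;> obtain ⟨rfl, rfl⟩ := h
  · -- (inl x, inr x)
    refine ⟨[(false, Am x, Mm x), (true, Mm x, Cm x)], ⟨by simp, ?_, by simp [List.Chain']⟩,
      by simp [ι₀], by simp [ι₀]⟩
    intro e he
    simp only [List.mem_cons, List.not_mem_nil, or_false] at he
    rcases he with rfl | rfl
    · exact edgeF_L.mpr (Or.inl ⟨x, Or.inl ⟨rfl, rfl⟩⟩)
    · exact edgeT_L.mpr (Or.inl ⟨x, Or.inl ⟨rfl, rfl⟩⟩)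
  · -- (inr x, inl x)
    refine ⟨[(true, Cm x, Mm x), (false, Mm x, Am x)], ⟨by simp, ?_, by simp [List.Chain']⟩,
      by simp [ι₀], by simp [ι₀]⟩
    intro e he
    simp only [List.mem_cons, List.not_mem_nil, or_false] at he
    rcases he with rfl | rfl
    · exact edgeT_L.mpr (Or.inl ⟨x, Or.inr ⟨rfl, rfl⟩⟩)
    · exact edgeF_L.mpr (Or.inl ⟨x, Or.inr ⟨rfl, rfl⟩⟩)
  · -- (inr q.1, inr q.2), q ∈ θ
    refine ⟨[(true, Cm q.1, Cm q.2)], ⟨by simp, ?_, by simp [List.Chain']⟩,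
      by simp [ι₀], by simp [ι₀]⟩
    intro e he
    simp only [List.mem_cons, List.not_mem_nil, or_false] at he
    rcases he with rfl
    · exact edgeT_L.mpr (Or.inr ⟨q, hq, rfl, rfl⟩)
  · -- (inr q.1, inr q.2), q ∈ θ'
    refine ⟨[(true, Cm q.1, Mm q.1), (false, Mm q.1, Mm q.2),
      (true, Mm q.2, Cm q.2)], ⟨by simp, ?_, by simp [List.Chain']⟩, by simp [ι₀], by simp [ι₀]⟩
    intro e he
    simp only [List.mem_cons, List.not_mem_nil, or_false] at he
    rcases he with rfl | rfl | rfl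
    · exact edgeT_L.mpr (Or.inl ⟨q.1, Or.inr ⟨rfl, rfl⟩⟩)
    · exact edgeF_L.mpr (Or.inr ⟨q, hq, rfl, rfl⟩)
    · exact edgeT_L.mpr (Or.inl ⟨q.2, Or.inl ⟨rfl, rfl⟩⟩)

lemma compL (θ θ' : Set (X × X)) :
    comp (Lmap θ) (Lmap θ') = Lmap (θ ∪ θ') :=
  le_antisymm (compL_sub θ θ') (compL_sup θ θ')
lemma compR_sub (θ θ' : Set (X × X)) :
    comp (Rmap θ) (Rmap θ') ⊆ Rmap (θ ∪ θ') := by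
  rintro ⟨a, b⟩ ⟨L, ⟨hne, hmem, hch⟩, hhead, hlast⟩
  rcases L with _ | ⟨⟨b1, u1, v1⟩, L⟩
  · exact absurd rfl hne
  rcases L with _ | ⟨⟨b2, u2, v2⟩, L⟩
  · -- [e1]
    simp only [List.head?_cons, List.getLast?_singleton, Option.map_some,
      Option.some.injEq] at hhead hlast
    have h1 := hmem (b1, u1, v1) (by simp)
    cases b1
    · rw [edgeF_R] at h1
      rcases h1 with ⟨x, ⟨rfl, rfl⟩ | ⟨rfl, rfl⟩⟩ | ⟨⟨q1, q2⟩, hq, rfl, rfl⟩ <;>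
        rcases a with a | a <;> rcases b with b | b <;> simp [ι₀] at hhead hlast
      subst_vars
      exact Or.inr ⟨_, Or.inr hq, rfl⟩
    · rw [edgeT_R] at h1
      rcases h1 with ⟨x, ⟨rfl, rfl⟩ | ⟨rfl, rfl⟩⟩ | ⟨⟨q1, q2⟩, hq, rfl, rfl⟩ <;>
        rcases a with a | a <;> rcases b with b | b <;> simp [ι₀] at hhead hlast
  rcases L with _ | ⟨⟨b3, u3, v3⟩, L⟩
  · -- [e1, e2]
    simp only [List.head?_cons, Option.map_some, Option.some.injEq] at hhead
    have hlast' : v2 = ι₀ b := by simpa using hlast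
    have h1 := hmem (b1, u1, v1) (by simp)
    have h2 := hmem (b2, u2, v2) (by simp)
    obtain ⟨⟨hbb, rfl⟩, -⟩ := List.isChain_cons_cons.mp hch
    cases b1 <;> cases b2 <;> try exact absurd rfl hbb
    · rw [edgeF_R] at h1; rw [edgeT_R] at h2
      rcases h1 with ⟨x, ⟨rfl, rfl⟩ | ⟨rfl, rfl⟩⟩ | ⟨⟨q1, q2⟩, hq, rfl, rfl⟩ <;>
        rcases h2 with ⟨y, ⟨h, rfl⟩ | ⟨h, rfl⟩⟩ | ⟨⟨r1, r2⟩, hr, h, rfl⟩ <;>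
        rcases a with a | a <;> rcases b with b | b <;>
          simp [ι₀] at hhead hlast' h <;> subst_vars
      exact Or.inl ⟨_, Or.inl rfl⟩
    · rw [edgeT_R] at h1; rw [edgeF_R] at h2
      rcases h1 with ⟨x, ⟨rfl, rfl⟩ | ⟨rfl, rfl⟩⟩ | ⟨⟨q1, q2⟩, hq, rfl, rfl⟩ <;>
        rcases h2 with ⟨y, ⟨h, rfl⟩ | ⟨h, rfl⟩⟩ | ⟨⟨r1, r2⟩, hr, h, rfl⟩ <;>
        rcases a with a | a <;> rcases b with b | b <;>
          simp [ι₀] at hhead hlast' h <;> subst_vars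
      exact Or.inl ⟨_, Or.inr rfl⟩
  rcases L with _ | ⟨⟨b4, u4, v4⟩, L⟩
  · -- [e1, e2, e3]
    simp only [List.head?_cons, Option.map_some, Option.some.injEq] at hhead
    have hlast' : v3 = ι₀ b := by simpa using hlast
    have h1 := hmem (b1, u1, v1) (by simp)
    have h2 := hmem (b2, u2, v2) (by simp)
    have h3 := hmem (b3, u3, v3) (by simp)
    obtain ⟨⟨hb12, rfl⟩, hch2⟩ := List.isChain_cons_cons.mp hch
    obtain ⟨⟨hb23, rfl⟩, -⟩ := List.isChain_cons_cons.mp hch2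
    cases b1 <;> cases b2 <;> try exact absurd rfl hb12
    all_goals cases b3 <;> try exact absurd rfl hb23
    · -- f t f
      rw [edgeF_R] at h1 h3; rw [edgeT_R] at h2
      rcases h1 with ⟨x, ⟨rfl, rfl⟩ | ⟨rfl, rfl⟩⟩ | ⟨⟨q1, q2⟩, hq, rfl, rfl⟩ <;>
        rcases h2 with ⟨y, ⟨h, rfl⟩ | ⟨h, rfl⟩⟩ | ⟨⟨r1, r2⟩, hr, h, rfl⟩ <;>
        rcases h3 with ⟨w, ⟨h', rfl⟩ | ⟨h', rfl⟩⟩ | ⟨⟨s1, s2⟩, hs, h', rfl⟩ <;>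
        rcases a with a | a <;> rcases b with b | b <;>
          simp [ι₀] at hhead hlast' h h' <;> subst_vars
      exact Or.inr ⟨_, Or.inl hr, rfl⟩
    · -- t f t
      rw [edgeT_R] at h1 h3; rw [edgeF_R] at h2
      rcases h1 with ⟨x, ⟨rfl, rfl⟩ | ⟨rfl, rfl⟩⟩ | ⟨⟨q1, q2⟩, hq, rfl, rfl⟩ <;>
        rcases h2 with ⟨y, ⟨h, rfl⟩ | ⟨h, rfl⟩⟩ | ⟨⟨r1, r2⟩, hr, h, rfl⟩ <;>
        rcases h3 with ⟨w, ⟨h', rfl⟩ | ⟨h', rfl⟩⟩ | ⟨⟨s1, s2⟩, hs, h', rfl⟩ <;>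
        rcases a with a | a <;> rcases b with b | b <;>
          simp [ι₀] at hhead hlast' h h'
  · -- length ≥ 4 : impossible
    exfalso
    simp only [List.head?_cons, Option.map_some, Option.some.injEq] at hhead
    have h1 := hmem (b1, u1, v1) (by simp)
    have h2 := hmem (b2, u2, v2) (by simp)
    have h3 := hmem (b3, u3, v3) (by simp)
    have h4 := hmem (b4, u4, v4) (by simp)
    obtain ⟨⟨hb12, rfl⟩, hch2⟩ := List.isChain_cons_cons.mp hch
    obtain ⟨⟨hb23, rfl⟩, hch3⟩ := List.isChain_cons_cons.mp hch2
    obtain ⟨⟨hb34, rfl⟩, -⟩ := List.isChain_cons_cons.mp hch3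
    cases b1 <;> cases b2 <;> try exact absurd rfl hb12
    all_goals cases b3 <;> try exact absurd rfl hb23
    all_goals cases b4 <;> try exact absurd rfl hb34
    · -- f t f t
      rw [edgeF_R] at h1 h3; rw [edgeT_R] at h2 h4
      rcases h1 with ⟨x, ⟨rfl, rfl⟩ | ⟨rfl, rfl⟩⟩ | ⟨⟨q1, q2⟩, hq, rfl, rfl⟩ <;>
        rcases h2 with ⟨y, ⟨h, rfl⟩ | ⟨h, rfl⟩⟩ | ⟨⟨r1, r2⟩, hr, h, rfl⟩ <;>
        rcases h3 with ⟨w, ⟨h', rfl⟩ | ⟨h', rfl⟩⟩ | ⟨⟨s1, s2⟩, hs, h', rfl⟩ <;>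
        rcases h4 with ⟨z, ⟨h'', rfl⟩ | ⟨h'', rfl⟩⟩ | ⟨⟨t1, t2⟩, ht, h'', rfl⟩ <;>
        rcases a with a | a <;>
          simp [ι₀] at hhead h h' h''
    · -- t f t f
      rw [edgeT_R] at h1 h3; rw [edgeF_R] at h2 h4
      rcases h1 with ⟨x, ⟨rfl, rfl⟩ | ⟨rfl, rfl⟩⟩ | ⟨⟨q1, q2⟩, hq, rfl, rfl⟩ <;>
        rcases h2 with ⟨y, ⟨h, rfl⟩ | ⟨h, rfl⟩⟩ | ⟨⟨r1, r2⟩, hr, h, rfl⟩ <;>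
        rcases h3 with ⟨w, ⟨h', rfl⟩ | ⟨h', rfl⟩⟩ | ⟨⟨s1, s2⟩, hs, h', rfl⟩ <;>
        rcases a with a | a <;>
          simp [ι₀] at hhead h h'

lemma compR_sup (θ θ' : Set (X × X)) :
    Rmap (θ ∪ θ') ⊆ comp (Rmap θ) (Rmap θ') := by
  rintro ⟨a, b⟩ (⟨x, h | h⟩ | ⟨q, hq | hq, h⟩) <;>
    rw [Prod.mk.injEq] at h <;> obtain ⟨rfl, rfl⟩ := h
  · -- (inl x, inr x)
    refine ⟨[(false, Am x, Mm x), (true, Mm x, Cm x)], ⟨by simp, ?_, by simp [List.Chain']⟩,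
      by simp [ι₀], by simp [ι₀]⟩
    intro e he
    simp only [List.mem_cons, List.not_mem_nil, or_false] at he
    rcases he with rfl | rfl
    · exact edgeF_R.mpr (Or.inl ⟨x, Or.inl ⟨rfl, rfl⟩⟩)
    · exact edgeT_R.mpr (Or.inl ⟨x, Or.inl ⟨rfl, rfl⟩⟩)
  · -- (inr x, inl x)
    refine ⟨[(true, Cm x, Mm x), (false, Mm x, Am x)], ⟨by simp, ?_, by simp [List.Chain']⟩,
      by simp [ι₀], by simp [ι₀]⟩
    intro e he
    simp only [List.mem_cons, List.not_mem_nil, or_false] at he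
    rcases he with rfl | rfl
    · exact edgeT_R.mpr (Or.inl ⟨x, Or.inr ⟨rfl, rfl⟩⟩)
    · exact edgeF_R.mpr (Or.inl ⟨x, Or.inr ⟨rfl, rfl⟩⟩)
  · -- (inl q.1, inl q.2), q ∈ θ
    refine ⟨[(false, Am q.1, Mm q.1), (true, Mm q.1, Mm q.2),
      (false, Mm q.2, Am q.2)], ⟨by simp, ?_, by simp [List.Chain']⟩, by simp [ι₀], by simp [ι₀]⟩
    intro e he
    simp only [List.mem_cons, List.not_mem_nil, or_false] at he
    rcases he with rfl | rfl | rfl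
    · exact edgeF_R.mpr (Or.inl ⟨q.1, Or.inl ⟨rfl, rfl⟩⟩)
    · exact edgeT_R.mpr (Or.inr ⟨q, hq, rfl, rfl⟩)
    · exact edgeF_R.mpr (Or.inl ⟨q.2, Or.inr ⟨rfl, rfl⟩⟩)
  · -- (inl q.1, inl q.2), q ∈ θ'
    refine ⟨[(false, Am q.1, Am q.2)], ⟨by simp, ?_, by simp [List.Chain']⟩,
      by simp [ι₀], by simp [ι₀]⟩
    intro e he
    simp only [List.mem_cons, List.not_mem_nil, or_false] at he
    rcases he with rfl
    exact edgeF_R.mpr (Or.inr ⟨q, hq, rfl, rfl⟩)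

lemma compR (θ θ' : Set (X × X)) :
    comp (Rmap θ) (Rmap θ') = Rmap (θ ∪ θ') :=
  le_antisymm (compR_sub θ θ') (compR_sup θ θ')
lemma mem_Lmap {θ : Set (X × X)} {q : X × X} :
    (Sum.inr q.1, Sum.inr q.2) ∈ Lmap θ ↔ q ∈ θ := by
  constructor
  · rintro (⟨x, h | h⟩ | ⟨r, hr, h⟩) <;> simp [Prod.ext_iff] at h
    obtain ⟨h1, h2⟩ := h
    rwa [show q = r from Prod.ext h1 h2]
  · intro hq; exact Or.inr ⟨q, hq, rfl⟩

lemma mem_Rmap {θ : Set (X × X)} {q : X × X} :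
    (Sum.inl q.1, Sum.inl q.2) ∈ Rmap θ ↔ q ∈ θ := by
  constructor
  · rintro (⟨x, h | h⟩ | ⟨r, hr, h⟩) <;> simp [Prod.ext_iff] at h
    obtain ⟨h1, h2⟩ := h
    rwa [show q = r from Prod.ext h1 h2]
  · intro hq; exact Or.inr ⟨q, hq, rfl⟩

lemma Lmap_inj : Function.Injective (Lmap (X := X)) := by
  intro θ θ' h
  ext q
  rw [← mem_Lmap (θ := θ), ← mem_Lmap (θ := θ'), h]

lemma Rmap_inj : Function.Injective (Rmap (X := X)) := by
  intro θ θ' h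
  ext q
  rw [← mem_Rmap (θ := θ), ← mem_Rmap (θ := θ'), h]

lemma range_L : Set.range (Lmap (X := X)) = {α : PBR X X | IsLeftPol α} := by
  ext α
  constructor
  · rintro ⟨θ, rfl⟩
    refine ⟨fun p hp => Or.inl hp, ?_⟩
    rintro p (hp | ⟨q, hq, rfl⟩)
    · exact Or.inl hp
    · exact Or.inr ⟨q.1, q.2, rfl⟩
  · rintro ⟨h1, h2⟩
    refine ⟨{q | (Sum.inr q.1, Sum.inr q.2) ∈ α}, ?_⟩
    ext p
    constructor
    · rintro (hp | ⟨q, hq, rfl⟩)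
      · exact h1 hp
      · exact hq
    · intro hp
      rcases h2 p hp with hp' | ⟨y, y', rfl⟩
      · exact Or.inl hp'
      · exact Or.inr ⟨(y, y'), hp, rfl⟩

lemma range_R : Set.range (Rmap (X := X)) = {α : PBR X X | IsRightPol α} := by
  ext α
  constructor
  · rintro ⟨θ, rfl⟩
    refine ⟨fun p hp => Or.inl hp, ?_⟩
    rintro p (hp | ⟨q, hq, rfl⟩)
    · exact Or.inl hp
    · exact Or.inr ⟨q.1, q.2, rfl⟩
  · rintro ⟨h1, h2⟩
    refine ⟨{q | (Sum.inl q.1, Sum.inl q.2) ∈ α}, ?_⟩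
    ext p
    constructor
    · rintro (hp | ⟨q, hq, rfl⟩)
      · exact h1 hp
      · exact hq
    · intro hp
      rcases h2 p hp with hp' | ⟨y, y', rfl⟩
      · exact Or.inl hp'
      · exact Or.inr ⟨(y, y'), hp, rfl⟩

lemma cardL [Fintype X] :
    Nat.card {α : PBR X X // IsLeftPol α} = 2 ^ (Fintype.card X ^ 2) := by
  have e : Set (X × X) ≃ {α : PBR X X // IsLeftPol α} :=
    (Equiv.ofInjective _ Lmap_inj).trans (Equiv.setCongr range_L)
  rw [← Nat.card_congr e, Nat.card_eq_fintype_card, Fintype.card_set,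
    Fintype.card_prod, sq]

lemma cardR [Fintype X] :
    Nat.card {α : PBR X X // IsRightPol α} = 2 ^ (Fintype.card X ^ 2) := by
  have e : Set (X × X) ≃ {α : PBR X X // IsRightPol α} :=
    (Equiv.ofInjective _ Rmap_inj).trans (Equiv.setCongr range_R)
  rw [← Nat.card_congr e, Nat.card_eq_fintype_card, Fintype.card_set,
    Fintype.card_prod, sq]

end Helpers


/-- `L(θ)∘L(θ') = L(θ ∪ θ')`, `L` is injective with image the set `PI(X,l)` of
left polarized idempotents, so `PI(X,l)` is a submonoid of PBRs on `(X,X)`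
isomorphic to the semilattice of binary relations on `X` under union, and
`|PI(X,l)| = 2^{|X|²}`; and the analogous statements for `PI(X,r)`. -/
theorem polarized_idempotents_semilattice (X : Type) [Fintype X] :
    (∀ θ θ' : Set (X × X), comp (Lmap θ) (Lmap θ') = Lmap (θ ∪ θ')) ∧
    Function.Injective (Lmap (X := X)) ∧
    Set.range (Lmap (X := X)) = {α : PBR X X | IsLeftPol α} ∧
    Nat.card {α : PBR X X // IsLeftPol α} = 2 ^ (Fintype.card X ^ 2) ∧
    (∀ θ θ' : Set (X × X), comp (Rmap θ) (Rmap θ') = Rmap (θ ∪ θ')) ∧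
    Function.Injective (Rmap (X := X)) ∧
    Set.range (Rmap (X := X)) = {α : PBR X X | IsRightPol α} ∧
    Nat.card {α : PBR X X // IsRightPol α} = 2 ^ (Fintype.card X ^ 2) := by
  exact ⟨compL, Lmap_inj, range_L, cardL, compR, Rmap_inj, range_R, cardR⟩

end PBRPaper
end
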